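/- arXiv:1704.02137 — 2 statements merged into one kernel-verified Lean document; each statement's English description precedes it below -/
import Mathlib

section
/- Let ξ₁, ξ₂, … be i.i.d. real-valued random variables with common distribution function F_ξ ∈ 𝒞, and let η be a counting random variable independent of the sequence with E η^{p+1} < ∞ for some p > J⁺_{F_ξ}. Then the distribution function of S_{(η)} = max{S₀, S₁, …, S_η} (where Sₙ = ξ₁+⋯+ξₙ, S₀ = 0) belongs to 𝒞. -/
open Filter MeasureTheory ProbabilityTheory

/-- `T` is a consistently varying tail function: `lim_{y↑1} limsup_{x→∞} T(xy)/T(x) = 1`. -/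
def ConsistentlyVaryingTail (T : ℝ → ℝ) : Prop :=
  Tendsto (fun y : ℝ => limsup (fun x : ℝ => T (x * y) / T x) atTop)
    (nhdsWithin 1 (Set.Iio 1)) (nhds 1)

/-- `partialSum ξ n ω = ξ 1 ω + ⋯ + ξ n ω` (with `partialSum ξ 0 ω = 0`). -/
noncomputable def partialSum {Ω : Type*} (ξ : ℕ → Ω → ℝ) (n : ℕ) (ω : Ω) : ℝ :=
  ∑ k ∈ Finset.Icc 1 n, ξ k ω

/-- `maxSum ξ n ω = max {S₀, S₁, …, Sₙ}` where `Sₖ = partialSum ξ k ω`. -/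
noncomputable def maxSum {Ω : Type*} (ξ : ℕ → Ω → ℝ) (n : ℕ) (ω : Ω) : ℝ :=
  (Finset.range (n + 1)).sup' Finset.nonempty_range_add_one (fun k => partialSum ξ k ω)

open Set Topology
open scoped ENNReal

namespace RSM
set_option maxHeartbeats 1600000



lemma isBoundedUnder_of_limsup_pos {f : ℝ → ℝ} (h : (0:ℝ) < limsup f atTop) :
    IsBoundedUnder (· ≤ ·) atTop f := by
  by_contra hb
  have hset : {a : ℝ | ∀ᶠ x in atTop, f x ≤ a} = ∅ := by
    ext a
    simp only [Set.mem_setOf_eq, Set.mem_empty_iff_false, iff_false]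
    intro ha
    exact hb ⟨a, eventually_map.2 ha⟩
  rw [limsup_eq, hset, Real.sInf_empty] at h
  exact lt_irrefl _ h

variable {T : ℝ → ℝ}

lemma phi2T (hTpos : ∀ x, 0 < T x)
    (hC : Tendsto (fun y : ℝ => limsup (fun x : ℝ => T (x * y) / T x) atTop)
      (nhdsWithin 1 (Set.Iio 1)) (nhds 1)) :
    ∀ ε > (0:ℝ), ∃ u₀ : ℝ, 1/2 ≤ u₀ ∧ u₀ < 1 ∧ ∀ u, u₀ < u → u < 1 →
      ∀ᶠ x in atTop, T (u * x) ≤ (1 + ε) * T x := by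
  intro ε hε
  have hmem : Set.Ioo (1/2 : ℝ) (1 + ε) ∈ 𝓝 (1:ℝ) := Ioo_mem_nhds (by norm_num) (by linarith)
  have hpre := hC hmem
  rw [mem_map] at hpre
  rw [mem_nhdsLT_iff_exists_Ioo_subset] at hpre
  obtain ⟨a, ha, hsub⟩ := hpre
  refine ⟨max a (1/2), le_max_right _ _, max_lt ha (by norm_num), fun u hu1 hu2 => ?_⟩
  have hu' : limsup (fun x : ℝ => T (x * u) / T x) atTop ∈ Set.Ioo (1/2:ℝ) (1+ε) :=
    hsub ⟨lt_of_le_of_lt (le_max_left _ _) hu1, hu2⟩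
  have hbd : IsBoundedUnder (· ≤ ·) atTop (fun x : ℝ => T (x * u) / T x) :=
    isBoundedUnder_of_limsup_pos (lt_trans (by norm_num) hu'.1)
  have hev := eventually_lt_of_limsup_lt hu'.2 hbd
  filter_upwards [hev, eventually_gt_atTop (0:ℝ)] with x hx hx0
  have h2 := (div_lt_iff₀ (hTpos x)).1 hx
  rw [mul_comm] at h2
  linarith

lemma chain_pow (hTanti : Antitone T) {u : ℝ} (hu0 : 0 < u)
    (h : ∀ᶠ x in atTop, T (u * x) ≤ 2 * T x) :
    ∀ k : ℕ, ∀ᶠ x in atTop, T (u ^ k * x) ≤ 2 ^ k * T x := by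
  intro k; induction k with
  | zero => filter_upwards with x; simp
  | succ k ih =>
    have hmul : Tendsto (fun x : ℝ => u * x) atTop atTop :=
      Tendsto.const_mul_atTop hu0 tendsto_id
    filter_upwards [h, hmul.eventually ih] with x hx hx'
    have he : u ^ (k+1) * x = u ^ k * (u * x) := by ring
    rw [he, pow_succ]
    have h2k : (0:ℝ) ≤ 2 ^ k := by positivity
    calc T (u^k * (u*x)) ≤ 2^k * T (u*x) := hx'
    _ ≤ 2^k * (2 * T x) := by nlinarith
    _ = 2^k * 2 * T x := by ring

lemma liminf_ratio_pos (hTanti : Antitone T) (hTpos : ∀ x, 0 < T x)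
    (hC : Tendsto (fun y : ℝ => limsup (fun x : ℝ => T (x * y) / T x) atTop)
      (nhdsWithin 1 (Set.Iio 1)) (nhds 1)) :
    ∀ y : ℝ, 1 < y → ∃ c : ℝ, 0 < c ∧ ∀ᶠ x in atTop, c * T x ≤ T (x * y) := by
  intro y hy
  obtain ⟨u₀, hu₀half, hu₀1, hΦ⟩ := phi2T hTpos hC 1 one_pos
  set u := (1 + u₀)/2 with hu
  have hu0 : 0 < u := by rw [hu]; linarith
  have hu1 : u < 1 := by rw [hu]; linarith
  have hbase : ∀ᶠ x in atTop, T (u * x) ≤ 2 * T x := by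
    filter_upwards [hΦ u (by rw [hu]; linarith) hu1] with x hx
    linarith
  obtain ⟨k, hk⟩ : ∃ k : ℕ, u ^ k < 1/y := exists_pow_lt_of_lt_one (by positivity) hu1
  refine ⟨(1/2)^k, by positivity, ?_⟩
  have hch := chain_pow hTanti hu0 hbase k
  have hmul : Tendsto (fun x : ℝ => x * y) atTop atTop :=
    Tendsto.atTop_mul_const (by linarith) tendsto_id
  filter_upwards [hmul.eventually hch, eventually_gt_atTop (0:ℝ)] with x hch' hx0
  have hy0 : (0:ℝ) < y := by linarith
  have h1 : u^k * (x*y) ≤ x := by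
    have huk : (0:ℝ) < u ^ k := by positivity
    have h2 : u^k * y ≤ 1 := by
      rw [one_div] at hk
      have : u^k * y ≤ y⁻¹ * y := by nlinarith
      rwa [inv_mul_cancel₀ (by linarith : y ≠ 0)] at this
    nlinarith
  have h2 := le_trans (hTanti h1) hch'
  have h2k : (1/2:ℝ)^k * (2:ℝ)^k = 1 := by
    rw [← mul_pow]; norm_num
  have hTxy : 0 < T (x*y) := hTpos _
  have h12k : (0:ℝ) < (1/2:ℝ)^k := by positivity
  nlinarith



variable {T : ℝ → ℝ}

lemma potter (hTanti : Antitone T) (hTpos : ∀ x, 0 < T x)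
    (hC : Tendsto (fun y : ℝ => limsup (fun x : ℝ => T (x * y) / T x) atTop)
      (nhdsWithin 1 (Set.Iio 1)) (nhds 1))
    {J p : ℝ}
    (hJ : Tendsto (fun y : ℝ =>
        -((1 / Real.log y) * Real.log (liminf (fun x : ℝ => T (x * y) / T x) atTop)))
      atTop (nhds J))
    (hp : J < p)
    (hliminfpos : ∀ y : ℝ, 1 < y → ∃ c : ℝ, 0 < c ∧ ∀ᶠ x in atTop, c * T x ≤ T (x * y))
    (hΦ2T : ∀ ε > (0:ℝ), ∃ u₀ : ℝ, 1/2 ≤ u₀ ∧ u₀ < 1 ∧ ∀ u, u₀ < u → u < 1 →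
      ∀ᶠ x in atTop, T (u * x) ≤ (1 + ε) * T x) :
    ∃ p₁ C x₁ : ℝ, 0 < p₁ ∧ p₁ < p ∧ 1 ≤ C ∧ 1 ≤ x₁ ∧
      ∀ t : ℝ, 1 ≤ t → ∀ x : ℝ, x₁ ≤ x → T x ≤ C * t ^ p₁ * T (x * t) := by
  have hrle1 : ∀ y : ℝ, 1 ≤ y → ∀ᶠ x in atTop, T (x * y) / T x ≤ 1 := by
    intro y hy
    filter_upwards [eventually_gt_atTop (0:ℝ)] with x hx0
    have : x ≤ x * y := by nlinarith
    exact div_le_one_of_le₀ (hTanti this) (hTpos x).le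
  have hrnn : ∀ y : ℝ, ∀ x : ℝ, (0:ℝ) ≤ T (x * y) / T x := by
    intro y x
    exact div_nonneg (hTpos _).le (hTpos _).le
  -- J is nonnegative
  have hJ0 : (0:ℝ) ≤ J := by
    refine ge_of_tendsto hJ ?_
    filter_upwards [eventually_ge_atTop (1:ℝ)] with y hy
    have h1 : liminf (fun x : ℝ => T (x * y) / T x) atTop ≤ 1 :=
      liminf_le_of_frequently_le ((hrle1 y hy).frequently)
        ⟨0, eventually_map.2 (Eventually.of_forall fun x => hrnn y x)⟩
    have h0 : (0:ℝ) ≤ liminf (fun x : ℝ => T (x * y) / T x) atTop :=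
      le_liminf_of_le (isCoboundedUnder_ge_of_eventually_le atTop (hrle1 y hy))
        (Eventually.of_forall fun x => hrnn y x)
    have hlog : Real.log (liminf (fun x : ℝ => T (x * y) / T x) atTop) ≤ 0 :=
      Real.log_nonpos h0 h1
    have hly : (0:ℝ) ≤ 1 / Real.log y := by
      have := Real.log_nonneg hy; positivity
    nlinarith
  set p₁ := (J + p)/2 with hp₁def
  have hp₁pos : 0 < p₁ := by rw [hp₁def]; linarith
  have hJp₁ : J < p₁ := by rw [hp₁def]; linarith
  have hp₁p : p₁ < p := by rw [hp₁def]; linarith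
  -- choose y₀
  obtain ⟨y₀, hy₀A, hy₀2⟩ :=
    ((hJ.eventually_lt_const hJp₁).and (eventually_ge_atTop (2:ℝ))).exists
  have hy₀1 : (1:ℝ) < y₀ := by linarith
  have hy₀pos : (0:ℝ) < y₀ := by linarith
  set L := liminf (fun x : ℝ => T (x * y₀) / T x) atTop with hLdef
  obtain ⟨c, hc0, hcev⟩ := hliminfpos y₀ hy₀1
  have hLc : c ≤ L := by
    refine le_liminf_of_le (isCoboundedUnder_ge_of_eventually_le atTop (hrle1 y₀ hy₀1.le)) ?_
    filter_upwards [hcev] with x hx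
    exact (le_div_iff₀ (hTpos x)).2 hx
  have hL0 : 0 < L := lt_of_lt_of_le hc0 hLc
  have hlogy : 0 < Real.log y₀ := Real.log_pos hy₀1
  -- L > y₀ ^ (-p₁)
  have hLgt : y₀ ^ (-p₁ : ℝ) < L := by
    have h5 : (-Real.log L) / Real.log y₀ < p₁ := by
      have : -((1 / Real.log y₀) * Real.log L) = (-Real.log L) / Real.log y₀ := by ring
      rw [← this]; exact hy₀A
    have h6 : -Real.log L < p₁ * Real.log y₀ := (div_lt_iff₀ hlogy).1 h5
    have h7 : Real.log (y₀ ^ (-p₁ : ℝ)) = -p₁ * Real.log y₀ := Real.log_rpow hy₀pos _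
    have h8 : Real.log (y₀ ^ (-p₁ : ℝ)) < Real.log L := by rw [h7]; linarith
    exact (Real.log_lt_log_iff (Real.rpow_pos_of_pos hy₀pos _) hL0).1 h8
  have hstepev : ∀ᶠ x in atTop, T x ≤ y₀ ^ (p₁ : ℝ) * T (x * y₀) := by
    have hev2 := eventually_lt_of_lt_liminf hLgt
      ⟨0, eventually_map.2 (Eventually.of_forall fun x => hrnn y₀ x)⟩
    filter_upwards [hev2, eventually_gt_atTop (0:ℝ)] with x hx hx0
    have h9 : y₀ ^ (-p₁:ℝ) * T x < T (x * y₀) := by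
      have := (lt_div_iff₀ (hTpos x)).1 hx
      linarith
    have h10 : y₀ ^ (-p₁:ℝ) = (y₀ ^ (p₁:ℝ))⁻¹ := Real.rpow_neg hy₀pos.le p₁
    have h11 : 0 < y₀ ^ (p₁:ℝ) := Real.rpow_pos_of_pos hy₀pos _
    rw [h10] at h9
    calc T x = y₀ ^ (p₁:ℝ) * ((y₀ ^ (p₁:ℝ))⁻¹ * T x) := by field_simp
    _ ≤ y₀ ^ (p₁:ℝ) * T (x * y₀) := by nlinarith
  obtain ⟨x₁', hx₁'⟩ := eventually_atTop.1 hstepev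
  set x₁ := max x₁' 1 with hx₁def
  have hx₁1 : (1:ℝ) ≤ x₁ := le_max_right _ _
  have hstep : ∀ x : ℝ, x₁ ≤ x → T x ≤ y₀ ^ (p₁:ℝ) * T (x * y₀) := fun x hx =>
    hx₁' x (le_trans (le_max_left _ _) hx)
  set C := y₀ ^ (p₁:ℝ) with hCdef
  have hC1 : (1:ℝ) ≤ C := Real.one_le_rpow hy₀1.le hp₁pos.le
  have hC0 : (0:ℝ) < C := lt_of_lt_of_le one_pos hC1
  -- chaining
  have hchain : ∀ m : ℕ, ∀ x : ℝ, x₁ ≤ x → T x ≤ C ^ m * T (x * y₀ ^ m) := by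
    intro m
    induction m with
    | zero => intro x hx; simp
    | succ m ih =>
      intro x hx
      have hx0 : (0:ℝ) < x := lt_of_lt_of_le (by linarith) hx
      have hy₀m : (1:ℝ) ≤ y₀ ^ m := one_le_pow₀ hy₀1.le
      have h1 : x₁ ≤ x * y₀ ^ m := by nlinarith
      have h2 := hstep (x * y₀ ^ m) h1
      have h3 := ih x hx
      have h4 : x * y₀ ^ m * y₀ = x * y₀ ^ (m+1) := by ring
      rw [h4] at h2
      have hCm : (0:ℝ) < C ^ m := by positivity
      calc T x ≤ C ^ m * T (x * y₀ ^ m) := h3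
      _ ≤ C ^ m * (C * T (x * y₀ ^ (m+1))) := by nlinarith [hTpos (x * y₀ ^ m)]
      _ = C ^ (m+1) * T (x * y₀ ^ (m+1)) := by ring
  refine ⟨p₁, C, x₁, hp₁pos, hp₁p, hC1, hx₁1, ?_⟩
  intro t ht x hx
  have hx0 : (0:ℝ) < x := lt_of_lt_of_le (by linarith) hx
  have ht0 : (0:ℝ) < t := by linarith
  set m := ⌈Real.logb y₀ t⌉₊ with hmdef
  have hlogb0 : 0 ≤ Real.logb y₀ t := Real.logb_nonneg hy₀1 ht
  have hm1 : t ≤ y₀ ^ m := by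
    have h1 : Real.logb y₀ t ≤ (m:ℝ) := Nat.le_ceil _
    have h2 : y₀ ^ (Real.logb y₀ t) ≤ y₀ ^ (m:ℝ) :=
      Real.rpow_le_rpow_of_exponent_le hy₀1.le h1
    rw [Real.rpow_logb hy₀pos (by linarith) ht0] at h2
    rwa [Real.rpow_natCast] at h2
  have hm2 : (y₀:ℝ) ^ m ≤ y₀ * t := by
    have h1 : (m:ℝ) < Real.logb y₀ t + 1 := Nat.ceil_lt_add_one hlogb0
    have h2 : y₀ ^ (m:ℝ) ≤ y₀ ^ (Real.logb y₀ t + 1) :=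
      Real.rpow_le_rpow_of_exponent_le hy₀1.le h1.le
    rw [Real.rpow_add hy₀pos, Real.rpow_logb hy₀pos (by linarith) ht0, Real.rpow_one] at h2
    rw [Real.rpow_natCast] at h2
    linarith
  have hchain' := hchain m x hx
  have hkey : C ^ m ≤ C * t ^ (p₁:ℝ) := by
    have h1 : (C:ℝ) ^ m = (y₀ ^ m : ℝ) ^ (p₁:ℝ) := by
      rw [hCdef, ← Real.rpow_natCast (y₀ ^ (p₁:ℝ)) m, ← Real.rpow_natCast y₀ m,
        ← Real.rpow_mul hy₀pos.le, ← Real.rpow_mul hy₀pos.le, mul_comm]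
    rw [h1]
    have h2 : ((y₀:ℝ) ^ m) ^ (p₁:ℝ) ≤ (y₀ * t) ^ (p₁:ℝ) :=
      Real.rpow_le_rpow (by positivity) hm2 hp₁pos.le
    calc ((y₀:ℝ) ^ m) ^ (p₁:ℝ) ≤ (y₀ * t) ^ (p₁:ℝ) := h2
    _ = C * t ^ (p₁:ℝ) := by rw [Real.mul_rpow hy₀pos.le ht0.le]
  have hT2 : T (x * y₀ ^ m) ≤ T (x * t) := by
    apply hTanti; nlinarith
  have hCm0 : (0:ℝ) < C ^ m := by positivity
  calc T x ≤ C ^ m * T (x * y₀ ^ m) := hchain'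
  _ ≤ (C * t ^ (p₁:ℝ)) * T (x * t) := mul_le_mul hkey hT2 (hTpos _).le (by positivity)




theorem main_analytic
    (T : ℝ → ℝ) (H : ℕ → ℝ → ℝ) (Q : ℕ → ℝ → ℝ) (G : ℝ → ℝ) (B : ℕ → ℝ → ℝ)
    (pr : ℕ → ℝ) (q : ℝ) (J p : ℝ)
    (hTanti : Antitone T) (hTpos : ∀ x, 0 < T x) (hT1 : ∀ x, T x ≤ 1)
    (hT0 : Tendsto T atTop (nhds 0))
    (hC : Tendsto (fun y : ℝ => limsup (fun x : ℝ => T (x * y) / T x) atTop)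
      (nhdsWithin 1 (Set.Iio 1)) (nhds 1))
    (hJ : Tendsto (fun y : ℝ =>
        -((1 / Real.log y) * Real.log (liminf (fun x : ℝ => T (x * y) / T x) atTop)))
      atTop (nhds J))
    (hp : J < p)
    (hH1 : H 1 = T)
    (hHanti : ∀ k, Antitone (H k))
    (hHnn : ∀ k x, 0 ≤ H k x)
    (hUP : ∀ k, 1 ≤ k → ∀ w s : ℝ,
      H (k+1) w ≤ H k (w - s) + T (w - s) + H k s * T s)
    (hLOW : ∀ k, 1 ≤ k → ∀ w s : ℝ,
      H k (w+s) * (1 - B 1 s) + T (w+s) * (1 - B k s) - H k (w+s) * T (w+s) ≤ H (k+1) w)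
    (hB0 : ∀ k, 1 ≤ k → Tendsto (fun x => B k x) atTop (nhds 0))
    (hBnn : ∀ k x, 0 ≤ B k x)
    (hHT : ∀ k, 1 ≤ k → ∀ x : ℝ, 0 < x → H k x ≤ k * T (x / k))
    (hQT : ∀ n, 1 ≤ n → ∀ x : ℝ, 0 < x → Q n x ≤ n * T (x / n))
    (hQ0 : ∀ x : ℝ, 0 < x → Q 0 x = 0)
    (hQd : ∀ n, ∀ w z : ℝ, 0 < w → w ≤ z →
      Q n w - Q n z ≤ ∑ k ∈ Finset.Icc 1 n, (H k w - H k z))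
    (hQnn : ∀ n x, 0 ≤ Q n x) (hQ1 : ∀ n x, Q n x ≤ 1)
    (hpr : Summable pr) (hprnn : ∀ n, 0 ≤ pr n) (hpr1 : ∑' n, pr n ≤ 1)
    (hmom : Summable (fun n : ℕ => (n : ℝ) ^ (p + 1) * pr n))
    (hG : ∀ x, G x = ∑' n, pr n * Q n x)
    (hq : 0 < q) (hGq : ∀ x, q * T x ≤ G x) (hGanti : Antitone G) :
    Tendsto (fun y : ℝ => limsup (fun x : ℝ => G (x * y) / G x) atTop)
      (nhdsWithin 1 (Set.Iio 1)) (nhds 1) := by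
  obtain ⟨p₁, Cp, x₁, hp₁0, hp₁p, hCp1, hx₁1, hPot⟩ :=
    potter hTanti hTpos hC hJ hp (liminf_ratio_pos hTanti hTpos hC) (phi2T hTpos hC)
  have hCp0 : (0:ℝ) < Cp := by linarith
  have hx₁0 : (0:ℝ) < x₁ := by linarith
  set CK : ℝ := max Cp (Cp / T x₁) with hCKdef
  have hCK1 : (1:ℝ) ≤ CK := le_trans hCp1 (le_max_left _ _)
  have hCK0 : (0:ℝ) < CK := by linarith
  -- Kesten-type uniform bound
  have hKest : ∀ R : ℕ → ℝ → ℝ, (∀ n, 1 ≤ n → ∀ x : ℝ, 0 < x → R n x ≤ n * T (x / n)) →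
      ∀ n, 1 ≤ n → ∀ x : ℝ, x₁ ≤ x → R n x ≤ CK * (n:ℝ) ^ (p₁+1) * T x := by
    intro R hR n hn x hx
    have hx0 : (0:ℝ) < x := lt_of_lt_of_le hx₁0 hx
    have hn0 : (0:ℝ) < (n:ℝ) := by exact_mod_cast hn
    have hn1 : (1:ℝ) ≤ (n:ℝ) := by exact_mod_cast hn
    have hrp : (n:ℝ) ^ (p₁+1) = (n:ℝ) ^ p₁ * n := Real.rpow_add_one hn0.ne' p₁
    have hnp0 : (0:ℝ) < (n:ℝ) ^ p₁ := Real.rpow_pos_of_pos hn0 _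
    have hRb := hR n hn x hx0
    by_cases hcase : x₁ ≤ x / n
    · have hpot := hPot (n:ℝ) hn1 (x/n) hcase
      rw [div_mul_cancel₀ x hn0.ne'] at hpot
      have hCpCK : Cp ≤ CK := le_max_left _ _
      calc R n x ≤ n * T (x/n) := hRb
      _ ≤ n * (Cp * (n:ℝ)^p₁ * T x) := by
          apply mul_le_mul_of_nonneg_left hpot hn0.le
      _ = Cp * ((n:ℝ)^p₁ * n) * T x := by ring
      _ ≤ CK * (n:ℝ)^(p₁+1) * T x := by
          rw [hrp]
          have h1 : (0:ℝ) ≤ (n:ℝ)^p₁ * n * T x :=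
            mul_nonneg (mul_nonneg hnp0.le hn0.le) (hTpos x).le
          nlinarith [hTpos x]
    · push_neg at hcase
      have hlt : x / x₁ < n := by
        rw [div_lt_iff₀ hx₁0]
        rw [div_lt_iff₀ hn0] at hcase
        linarith [hcase]
      have hxx₁ : (1:ℝ) ≤ x / x₁ := (one_le_div hx₁0).2 hx
      have hTlow := hPot (x/x₁) hxx₁ x₁ le_rfl
      rw [mul_div_cancel₀ x hx₁0.ne'] at hTlow
      -- hTlow : T x₁ ≤ Cp * (x/x₁)^p₁ * T x
      have hA : (x/x₁:ℝ)^p₁ ≤ (n:ℝ)^p₁ := Real.rpow_le_rpow (by positivity) hlt.le hp₁0.le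
      have hApos : (0:ℝ) < (x/x₁:ℝ)^p₁ := Real.rpow_pos_of_pos (by positivity) _
      have hCK2 : Cp / T x₁ ≤ CK := le_max_right _ _
      have hTx₁ : 0 < T x₁ := hTpos x₁
      have hTx : 0 < T x := hTpos x
      have hTdn : T (x/n) ≤ 1 := hT1 _
      have hgoal : (n:ℝ) ≤ CK * (n:ℝ)^(p₁+1) * T x := by
        have h1 : Cp / T x₁ * ((x/x₁:ℝ)^p₁ * n) * (T x₁ / (Cp * (x/x₁:ℝ)^p₁)) = n := by
          field_simp
        have h2 : T x₁ / (Cp * (x/x₁:ℝ)^p₁) ≤ T x := by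
          rw [div_le_iff₀ (by positivity)]
          nlinarith [hTlow]
        have h3 : (x/x₁:ℝ)^p₁ * n ≤ (n:ℝ)^(p₁+1) := by
          rw [hrp]; nlinarith
        calc (n:ℝ) = Cp / T x₁ * ((x/x₁:ℝ)^p₁ * n) * (T x₁ / (Cp * (x/x₁:ℝ)^p₁)) := h1.symm
        _ ≤ CK * ((x/x₁:ℝ)^p₁ * n) * T x := by
            apply mul_le_mul (mul_le_mul_of_nonneg_right hCK2 (by positivity)) h2
              (by positivity) (by positivity)
        _ ≤ CK * (n:ℝ)^(p₁+1) * T x := by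
            apply mul_le_mul_of_nonneg_right (mul_le_mul_of_nonneg_left h3 hCK0.le) hTx.le
      calc R n x ≤ n * T (x/n) := hRb
      _ ≤ n * 1 := mul_le_mul_of_nonneg_left hTdn hn0.le
      _ = (n:ℝ) := mul_one _
      _ ≤ CK * (n:ℝ)^(p₁+1) * T x := hgoal
  have hKestH := hKest H hHT
  have hKestQ := hKest Q hQT
  clear hKest
  -- Phi2 property for each H k by induction on k ≥ 1
  have hPhi2 : ∀ k, 1 ≤ k → ∀ ε : ℝ, 0 < ε → ∃ u₀ : ℝ, 1/2 ≤ u₀ ∧ u₀ < 1 ∧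
      ∀ u, u₀ < u → u < 1 → ∀ᶠ x in atTop, H k (u*x) - H k x ≤ ε * T x := by
    intro k hk
    induction k, hk using Nat.le_induction with
    | base =>
      intro ε hε
      obtain ⟨u₀, h1, h2, h3⟩ := phi2T hTpos hC ε hε
      refine ⟨u₀, h1, h2, fun u hu hu1 => ?_⟩
      filter_upwards [h3 u hu hu1] with x hx
      rw [hH1]
      linarith [hTpos x]
    | succ k hk IH =>
      intro ε hε
      have hε8 : (0:ℝ) < ε/8 := by linarith
      obtain ⟨u₀k, hu₀kh, hu₀k1, hIH⟩ := IH (ε/8) hε8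
      obtain ⟨u₀t, hu₀th, hu₀t1, hTev⟩ := phi2T hTpos hC (ε/8) hε8
      set u₀' := max u₀k u₀t with hu₀'def
      have hu₀'1 : u₀' < 1 := max_lt hu₀k1 hu₀t1
      have hu₀'h : 1/2 ≤ u₀' := le_trans hu₀kh (le_max_left _ _)
      set δ := min ((1 - u₀')/2) (1/8) with hδdef
      have hδ0 : 0 < δ := lt_min (by linarith) (by norm_num)
      have hδ8 : δ ≤ 1/8 := min_le_right _ _
      have hδle : δ ≤ (1 - u₀')/2 := min_le_left _ _
      have hδ1 : δ < 1 := by linarith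
      refine ⟨(1 + u₀')/2, by linarith, by linarith, fun u huu hu1 => ?_⟩
      have huh : 1/2 < u := by linarith
      have hu0 : 0 < u := by linarith
      have huδ : u₀' < u - δ := by linarith
      have huδ1 : u - δ < 1 := by linarith
      have hinv : u₀' < 1/(1+δ) := by
        have h2' : 1 - δ ≤ 1/(1+δ) := by
          rw [le_div_iff₀ (by linarith : (0:ℝ) < 1+δ)]
          nlinarith
        linarith
      have hinv1 : 1/(1+δ) < 1 := by
        rw [div_lt_one (by linarith : (0:ℝ) < 1+δ)]
        linarith
      have e1 := hIH (u - δ) (lt_of_le_of_lt (le_max_left _ _) huδ) huδ1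
      have e1T := hTev (u - δ) (lt_of_le_of_lt (le_max_right _ _) huδ) huδ1
      have e2' := hIH (1/(1+δ)) (lt_of_le_of_lt (le_max_left _ _) hinv) hinv1
      have e2T' := hTev (1/(1+δ)) (lt_of_le_of_lt (le_max_right _ _) hinv) hinv1
      have hmulδ : Tendsto (fun x : ℝ => (1+δ)*x) atTop atTop :=
        Tendsto.const_mul_atTop (by linarith) tendsto_id
      have e2 : ∀ᶠ x in atTop, H k x - H k ((1+δ)*x) ≤ ε/8 * T x := by
        filter_upwards [hmulδ.eventually e2', eventually_ge_atTop (0:ℝ)] with x hx hx0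
        have harg : (1/(1+δ)) * ((1+δ)*x) = x := by field_simp
        rw [harg] at hx
        have hTle : T ((1+δ)*x) ≤ T x := hTanti (by nlinarith)
        nlinarith [hε8]
      have e4 : ∀ᶠ x in atTop, T x - T ((1+δ)*x) ≤ ε/8 * T x := by
        filter_upwards [hmulδ.eventually e2T', eventually_ge_atTop (0:ℝ)] with x hx hx0
        have harg : (1/(1+δ)) * ((1+δ)*x) = x := by field_simp
        rw [harg] at hx
        have hTle : T ((1+δ)*x) ≤ T x := hTanti (by nlinarith)
        nlinarith [hε8]
      have e3 : ∀ᶠ x in atTop, T ((u-δ)*x) - T x ≤ ε/8 * T x := by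
        filter_upwards [e1T] with x hx
        linarith
      set Ck := CK * (k:ℝ)^(p₁+1) with hCkdef
      have hk0 : (0:ℝ) < (k:ℝ) := by exact_mod_cast hk
      have hCk0 : 0 < Ck := mul_pos hCK0 (Real.rpow_pos_of_pos hk0 _)
      have hδx : Tendsto (fun x : ℝ => δ*x) atTop atTop :=
        Tendsto.const_mul_atTop hδ0 tendsto_id
      have e5 : ∀ᶠ x in atTop, H k (δ*x) * T (δ*x) ≤ ε/8 * T x := by
        set D := Ck * (Cp * (1/δ)^p₁) with hD
        have hD0 : 0 < D :=
          mul_pos hCk0 (mul_pos hCp0 (Real.rpow_pos_of_pos (by positivity) _))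
        have hsm : ∀ᶠ x in atTop, T (δ*x) < (ε/8)/D :=
          hδx.eventually (hT0.eventually_lt_const (by positivity))
        filter_upwards [hδx.eventually_ge_atTop x₁, hsm, eventually_gt_atTop (0:ℝ)]
          with x hx₁δ hxsm hx0
        have h1 : H k (δ*x) ≤ Ck * T (δ*x) := hKestH k hk (δ*x) hx₁δ
        have h2 : T (δ*x) ≤ Cp * (1/δ)^p₁ * T x := by
          have hpo := hPot (1/δ) ((one_le_div hδ0).2 (by linarith)) (δ*x) hx₁δ
          rw [show δ*x*(1/δ) = x by field_simp] at hpo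
          exact hpo
        have h4 : Ck * (Cp * (1/δ)^p₁ * T x) = D * T x := by rw [hD]; ring
        have h5 : D * T x * ((ε/8)/D) = ε/8 * T x := by field_simp
        calc H k (δ*x) * T (δ*x) ≤ (D * T x) * ((ε/8)/D) := by
              rw [← h4]
              apply mul_le_mul _ hxsm.le (hTpos _).le _
              · exact h1.trans (mul_le_mul_of_nonneg_left h2 hCk0.le)
              · rw [h4]; exact mul_nonneg hD0.le (hTpos x).le
        _ = ε/8 * T x := h5
      have e6 : ∀ᶠ x in atTop, H k ((1+δ)*x) * B 1 (δ*x) ≤ ε/8 * T x := by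
        have hsm : ∀ᶠ x in atTop, B 1 (δ*x) < (ε/8)/Ck :=
          hδx.eventually ((hB0 1 le_rfl).eventually_lt_const (by positivity))
        filter_upwards [hsm, eventually_ge_atTop x₁, eventually_ge_atTop (0:ℝ)]
          with x hxsm hx₁ hx0
        have h1 : H k ((1+δ)*x) ≤ H k x := hHanti k (by nlinarith)
        have h2 : H k x ≤ Ck * T x := hKestH k hk x hx₁
        calc H k ((1+δ)*x) * B 1 (δ*x) ≤ (Ck * T x) * ((ε/8)/Ck) :=
              mul_le_mul (h1.trans h2) hxsm.le (hBnn 1 _)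
                (mul_nonneg hCk0.le (hTpos x).le)
        _ = ε/8 * T x := by field_simp
      have e7 : ∀ᶠ x in atTop, T ((1+δ)*x) * B k (δ*x) ≤ ε/8 * T x := by
        have hsm : ∀ᶠ x in atTop, B k (δ*x) < ε/8 :=
          hδx.eventually ((hB0 k hk).eventually_lt_const hε8)
        filter_upwards [hsm, eventually_ge_atTop (0:ℝ)] with x hxsm hx0
        have h1 : T ((1+δ)*x) ≤ T x := hTanti (by nlinarith)
        calc T ((1+δ)*x) * B k (δ*x) ≤ T x * (ε/8) :=
              mul_le_mul h1 hxsm.le (hBnn k _) (hTpos x).le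
        _ = ε/8 * T x := by ring
      have e8 : ∀ᶠ x in atTop, H k ((1+δ)*x) * T ((1+δ)*x) ≤ ε/8 * T x := by
        have hsm : ∀ᶠ x in atTop, T ((1+δ)*x) < (ε/8)/Ck :=
          hmulδ.eventually (hT0.eventually_lt_const (by positivity))
        filter_upwards [hsm, eventually_ge_atTop x₁, eventually_ge_atTop (0:ℝ)]
          with x hxsm hx₁ hx0
        have h1 : H k ((1+δ)*x) ≤ Ck * T x :=
          le_trans (hHanti k (by nlinarith)) (hKestH k hk x hx₁)
        calc H k ((1+δ)*x) * T ((1+δ)*x) ≤ (Ck * T x) * ((ε/8)/Ck) :=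
              mul_le_mul h1 hxsm.le (hTpos _).le (mul_nonneg hCk0.le (hTpos x).le)
        _ = ε/8 * T x := by field_simp
      filter_upwards [e1, e2, e3, e4, e5, e6, e7, e8, eventually_gt_atTop (0:ℝ)]
        with x h1 h2 h3 h4 h5 h6 h7 h8 hx0
      have hup := hUP k hk (u*x) (δ*x)
      have hlow := hLOW k hk x (δ*x)
      have ha1 : u*x - δ*x = (u-δ)*x := by ring
      have ha2 : x + δ*x = (1+δ)*x := by ring
      rw [ha1] at hup
      rw [ha2] at hlow
      have hexp1 : H k ((1+δ)*x) * (1 - B 1 (δ*x)) =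
          H k ((1+δ)*x) - H k ((1+δ)*x) * B 1 (δ*x) := by ring
      have hexp2 : T ((1+δ)*x) * (1 - B k (δ*x)) =
          T ((1+δ)*x) - T ((1+δ)*x) * B k (δ*x) := by ring
      rw [hexp1, hexp2] at hlow
      linarith

  -- final assembly
  rw [Metric.tendsto_nhds]
  intro ε hε
  set c : ℕ → ℝ := fun n => (CK * (Cp * (2:ℝ)^(p₁:ℝ))) * ((n:ℝ)^(p₁+1) * pr n) with hcdef
  have hcsum0 : Summable (fun n : ℕ => (n:ℝ)^(p₁+1) * pr n) := by
    apply Summable.of_nonneg_of_le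
      (fun n => mul_nonneg (Real.rpow_nonneg (Nat.cast_nonneg n) _) (hprnn n)) _ hmom
    intro n
    rcases Nat.eq_zero_or_pos n with h0 | h1
    · subst h0
      simp [Real.zero_rpow (show p₁+1 ≠ 0 by linarith),
        Real.zero_rpow (show p+1 ≠ 0 by linarith)]
    · have hn1 : (1:ℝ) ≤ (n:ℝ) := by exact_mod_cast h1
      exact mul_le_mul_of_nonneg_right
        (Real.rpow_le_rpow_of_exponent_le hn1 (by linarith)) (hprnn n)
  have hcsum : Summable c := hcsum0.mul_left _
  obtain ⟨M, hM1, hMtail⟩ : ∃ M : ℕ, 1 ≤ M ∧ ∑' k, c (k + M) < q*ε/8 := by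
    have h := ((tendsto_sum_nat_add c).eventually_lt_const
      (show (0:ℝ) < q*ε/8 by positivity)).and (eventually_ge_atTop 1)
    obtain ⟨M, h1, h2⟩ := h.exists
    exact ⟨M, h2, h1⟩
  have hM0 : (0:ℝ) < (M:ℝ) := by exact_mod_cast hM1
  set ε₁ : ℝ := q*ε/(8*M) with hε₁def
  have hε₁ : 0 < ε₁ := by positivity
  have hU : ∀ k : ℕ, ∃ u₀ : ℝ, 1/2 ≤ u₀ ∧ u₀ < 1 ∧ (1 ≤ k → ∀ u, u₀ < u → u < 1 →
      ∀ᶠ x in atTop, H k (u*x) - H k x ≤ ε₁ * T x) := by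
    intro k
    by_cases hk : 1 ≤ k
    · obtain ⟨u₀, h1, h2, h3⟩ := hPhi2 k hk ε₁ hε₁
      exact ⟨u₀, h1, h2, fun _ => h3⟩
    · exact ⟨1/2, le_rfl, by norm_num, fun h => absurd h hk⟩
  choose U hU1 hU2 hU3 using hU
  have hne : (Finset.Icc 1 M).Nonempty := ⟨1, by simp [hM1]⟩
  set u₀ : ℝ := (Finset.Icc 1 M).sup' hne U with hu₀def
  have hu₀h : 1/2 ≤ u₀ :=
    le_trans (hU1 1) (Finset.le_sup' U (by simp [hM1]))
  have hu₀1 : u₀ < 1 := by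
    rw [hu₀def, Finset.sup'_lt_iff]
    exact fun k _ => hU2 k
  have hIoo : Set.Ioo u₀ 1 ∈ nhdsWithin (1:ℝ) (Set.Iio 1) := Ioo_mem_nhdsLT hu₀1
  filter_upwards [hIoo] with u hu
  obtain ⟨huu, hu1⟩ := hu
  have huhalf : 1/2 < u := lt_of_le_of_lt hu₀h huu
  have hu0 : (0:ℝ) < u := by linarith
  have hevH : ∀ᶠ x in atTop, ∀ k ∈ Finset.Icc 1 M, H k (u*x) - H k x ≤ ε₁ * T x := by
    rw [eventually_all_finset]
    intro k hk
    exact hU3 k (Finset.mem_Icc.1 hk).1 u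
      (lt_of_le_of_lt (Finset.le_sup' U hk) huu) hu1
  have hG2 : ∀ᶠ x in atTop, G (u*x) - G x ≤ (q*ε/4) * T x := by
    filter_upwards [hevH, eventually_ge_atTop (2*x₁), eventually_gt_atTop (0:ℝ)]
      with x hH' hx₂ hx0
    have hux0 : 0 < u*x := mul_pos hu0 hx0
    have huxx : u*x ≤ x := by nlinarith
    have hs1 : Summable (fun n => pr n * Q n (u*x)) :=
      Summable.of_nonneg_of_le (fun n => mul_nonneg (hprnn n) (hQnn n _))
        (fun n => mul_le_of_le_one_right (hprnn n) (hQ1 n _)) hpr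
    have hs2 : Summable (fun n => pr n * Q n x) :=
      Summable.of_nonneg_of_le (fun n => mul_nonneg (hprnn n) (hQnn n _))
        (fun n => mul_le_of_le_one_right (hprnn n) (hQ1 n _)) hpr
    set d : ℕ → ℝ := fun n => pr n * Q n (u*x) - pr n * Q n x with hddef
    have hd : Summable d := hs1.sub hs2
    have hGdiff : G (u*x) - G x = ∑' n, d n := by
      rw [hG, hG, ← Summable.tsum_sub hs1 hs2]
    have hsplit : (∑ i ∈ Finset.range M, d i) + ∑' i, d (i + M) = ∑' i, d i :=
      Summable.sum_add_tsum_nat_add M hd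
    have hMεT : (0:ℝ) ≤ (M:ℝ) * ε₁ * T x :=
      mul_nonneg (mul_nonneg hM0.le hε₁.le) (hTpos x).le
    have hQdiffb : ∀ i ∈ Finset.range M, d i ≤ pr i * ((M:ℝ) * ε₁ * T x) := by
      intro i hi
      have hiM : i ≤ M := le_of_lt (Finset.mem_range.1 hi)
      have hiM' : (i:ℝ) ≤ (M:ℝ) := by exact_mod_cast hiM
      rcases Nat.eq_zero_or_pos i with h0 | h1
      · subst h0
        have hzero : d 0 = 0 := by
          simp only [hddef, hQ0 _ hux0, hQ0 _ hx0, mul_zero, sub_zero]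
        rw [hzero]
        exact mul_nonneg (hprnn 0) hMεT
      · have hQd' := hQd i (u*x) x hux0 huxx
        have hsum : ∑ k ∈ Finset.Icc 1 i, (H k (u*x) - H k x) ≤
            ∑ _k ∈ Finset.Icc 1 i, ε₁ * T x := by
          apply Finset.sum_le_sum
          intro k hk
          exact hH' k (Finset.mem_Icc.2
            ⟨(Finset.mem_Icc.1 hk).1, le_trans (Finset.mem_Icc.1 hk).2 hiM⟩)
        have hcard : ∑ _k ∈ Finset.Icc 1 i, ε₁ * T x = (i:ℝ) * (ε₁ * T x) := by
          rw [Finset.sum_const, Nat.card_Icc]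
          simp [nsmul_eq_mul]
        have hQb2 : Q i (u*x) - Q i x ≤ (M:ℝ) * ε₁ * T x := by
          calc Q i (u*x) - Q i x ≤ (i:ℝ) * (ε₁ * T x) := by
                rw [← hcard]; exact le_trans hQd' hsum
          _ ≤ (M:ℝ) * (ε₁ * T x) :=
                mul_le_mul_of_nonneg_right hiM' (mul_nonneg hε₁.le (hTpos x).le)
          _ = (M:ℝ) * ε₁ * T x := by ring
        have hdi : d i = pr i * (Q i (u*x) - Q i x) := by
          simp only [hddef]; ring
        rw [hdi]
        exact mul_le_mul_of_nonneg_left hQb2 (hprnn i)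
    have hhead : ∑ i ∈ Finset.range M, d i ≤ (q*ε/8) * T x := by
      calc ∑ i ∈ Finset.range M, d i ≤ ∑ i ∈ Finset.range M, pr i * ((M:ℝ)*ε₁*T x) :=
          Finset.sum_le_sum hQdiffb
      _ = (∑ i ∈ Finset.range M, pr i) * ((M:ℝ)*ε₁*T x) := by rw [← Finset.sum_mul]
      _ ≤ 1 * ((M:ℝ)*ε₁*T x) := by
          apply mul_le_mul_of_nonneg_right _ hMεT
          exact le_trans (Summable.sum_le_tsum (Finset.range M) (fun i _ => hprnn i) hpr) hpr1
      _ = (q*ε/8) * T x := by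
          rw [one_mul, hε₁def]
          field_simp
    have htailb : ∑' i, d (i + M) ≤ (q*ε/8) * T x := by
      have hterm : ∀ i, d (i + M) ≤ c (i + M) * T x := by
        intro i
        set n := i + M with hn
        have hn1 : 1 ≤ n := le_trans hM1 (Nat.le_add_left M i)
        have hxx₁ : x₁ ≤ u*x := by nlinarith
        have hQb := hKestQ n hn1 (u*x) hxx₁
        have hT1' : T (u*x) ≤ T (x/2) := hTanti (by nlinarith)
        have hT2' : T (x/2) ≤ Cp * (2:ℝ)^(p₁:ℝ) * T x := by
          have hpo := hPot 2 (by norm_num) (x/2) (by linarith)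
          rw [show x/2*2 = x by ring] at hpo
          exact hpo
        have hd1 : d n ≤ pr n * Q n (u*x) := by
          have hnn : 0 ≤ pr n * Q n x := mul_nonneg (hprnn n) (hQnn n x)
          simp only [hddef]
          linarith
        calc d n ≤ pr n * Q n (u*x) := hd1
        _ ≤ pr n * (CK * (n:ℝ)^(p₁+1) * T (u*x)) :=
            mul_le_mul_of_nonneg_left hQb (hprnn n)
        _ ≤ pr n * (CK * (n:ℝ)^(p₁+1) * (Cp * (2:ℝ)^(p₁:ℝ) * T x)) := by
            apply mul_le_mul_of_nonneg_left _ (hprnn n)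
            exact mul_le_mul_of_nonneg_left (le_trans hT1' hT2')
              (mul_nonneg hCK0.le (Real.rpow_nonneg (Nat.cast_nonneg n) _))
        _ = c n * T x := by simp only [hcdef]; ring
      have hsd : Summable (fun i => d (i + M)) := (summable_nat_add_iff M).2 hd
      have hsc : Summable (fun i => c (i + M) * T x) :=
        ((summable_nat_add_iff M).2 hcsum).mul_right _
      calc ∑' i, d (i + M) ≤ ∑' i, c (i + M) * T x := Summable.tsum_le_tsum hterm hsd hsc
      _ = (∑' i, c (i + M)) * T x := tsum_mul_right
      _ ≤ (q*ε/8) * T x := mul_le_mul_of_nonneg_right hMtail.le (hTpos x).le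
    linarith [hGdiff, hsplit, hhead, htailb]
  have hGx : ∀ x : ℝ, 0 < G x := fun x => lt_of_lt_of_le (mul_pos hq (hTpos x)) (hGq x)
  have hev2 : ∀ᶠ x in atTop, 1 ≤ G (x*u)/G x ∧ G (x*u)/G x ≤ 1 + ε/4 := by
    filter_upwards [hG2, eventually_gt_atTop (0:ℝ)] with x h1 hx0
    have hGxp := hGx x
    have hxu : x*u = u*x := mul_comm x u
    constructor
    · rw [hxu]
      exact (one_le_div hGxp).2 (hGanti (by nlinarith))
    · rw [hxu, div_le_iff₀ hGxp]
      have hq1 := hGq x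
      nlinarith [mul_le_mul_of_nonneg_left hq1 (le_of_lt hε)]
  have hbb : IsBoundedUnder (· ≤ ·) atTop (fun x : ℝ => G (x*u)/G x) :=
    ⟨1+ε/4, eventually_map.2 (hev2.mono fun x h => h.2)⟩
  have h1le : 1 ≤ limsup (fun x : ℝ => G (x*u)/G x) atTop :=
    le_limsup_of_frequently_le ((hev2.mono fun x h => h.1).frequently) hbb
  have hle : limsup (fun x : ℝ => G (x*u)/G x) atTop ≤ 1+ε/4 :=
    limsup_le_of_le (isCoboundedUnder_le_of_eventually_le atTop (hev2.mono fun x h => h.1))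
      (hev2.mono fun x h => h.2)
  rw [Real.dist_eq, abs_lt]
  constructor
  · linarith
  · linarith





variable {Ω : Type*} [MeasurableSpace Ω] {μ : Measure Ω} [IsProbabilityMeasure μ]

lemma tail_anti (f : Ω → ℝ) : Antitone (fun x => (μ {ω | f ω > x}).toReal) := by
  intro a b hab
  exact ENNReal.toReal_mono (measure_ne_top μ _)
    (measure_mono (fun ω hω => lt_of_le_of_lt hab hω))

lemma tail_nonneg (f : Ω → ℝ) (x : ℝ) : 0 ≤ (μ {ω | f ω > x}).toReal :=
  ENNReal.toReal_nonneg

lemma tail_le_one (f : Ω → ℝ) (x : ℝ) : (μ {ω | f ω > x}).toReal ≤ 1 := by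
  rw [show (1:ℝ) = (1:ℝ≥0∞).toReal by simp]
  exact ENNReal.toReal_mono ENNReal.one_ne_top prob_le_one

lemma tail_tendsto_zero {f : Ω → ℝ} (hf : Measurable f) :
    Tendsto (fun x => (μ {ω | f ω > x}).toReal) atTop (nhds 0) := by
  have hmeasset : ∀ c : ℝ, MeasurableSet {ω | f ω > c} :=
    fun c => measurableSet_lt measurable_const hf
  have hempty : (⋂ n : ℕ, {ω | f ω > (n:ℝ)}) = ∅ := by
    ext ω
    simp only [Set.mem_iInter, Set.mem_setOf_eq, Set.mem_empty_iff_false, iff_false, not_forall,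
      not_lt]
    obtain ⟨n, hn⟩ := exists_nat_gt (f ω)
    exact ⟨n, hn.le⟩
  have hseq : Tendsto (fun n : ℕ => μ {ω | f ω > (n:ℝ)}) atTop (nhds 0) := by
    have h := tendsto_measure_iInter_atTop (μ := μ)
      (s := fun n : ℕ => {ω | f ω > (n:ℝ)})
      (fun n => (hmeasset _).nullMeasurableSet)
      (by
        intro a b hab ω hω
        simp only [Set.mem_setOf_eq] at hω ⊢
        have hcast : (a:ℝ) ≤ (b:ℝ) := by exact_mod_cast hab
        linarith)
      ⟨0, measure_ne_top μ _⟩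
    rw [hempty, measure_empty] at h
    exact h
  have hseqR : Tendsto (fun n : ℕ => (μ {ω | f ω > (n:ℝ)}).toReal) atTop (nhds 0) := by
    have := (ENNReal.tendsto_toReal (by simp : (0:ℝ≥0∞) ≠ ⊤)).comp hseq
    simpa [Function.comp_def] using this
  rw [Metric.tendsto_atTop] at hseqR ⊢
  intro ε hε
  obtain ⟨N, hN⟩ := hseqR ε hε
  refine ⟨N, fun x hx => ?_⟩
  have h1 := hN N le_rfl
  rw [Real.dist_eq, sub_zero, abs_of_nonneg ENNReal.toReal_nonneg] at h1 ⊢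
  exact lt_of_le_of_lt (tail_anti f hx) h1

lemma ltail_tendsto_zero {f : Ω → ℝ} (hf : Measurable f) :
    Tendsto (fun x => (μ {ω | f ω < -x}).toReal) atTop (nhds 0) := by
  have hmeasset : ∀ c : ℝ, MeasurableSet {ω | f ω < c} :=
    fun c => measurableSet_lt hf measurable_const
  have hempty : (⋂ n : ℕ, {ω | f ω < -(n:ℝ)}) = ∅ := by
    ext ω
    simp only [Set.mem_iInter, Set.mem_setOf_eq, Set.mem_empty_iff_false, iff_false, not_forall,
      not_lt]
    obtain ⟨n, hn⟩ := exists_nat_gt (-f ω)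
    exact ⟨n, by linarith⟩
  have hseq : Tendsto (fun n : ℕ => μ {ω | f ω < -(n:ℝ)}) atTop (nhds 0) := by
    have h := tendsto_measure_iInter_atTop (μ := μ)
      (s := fun n : ℕ => {ω | f ω < -(n:ℝ)})
      (fun n => (hmeasset _).nullMeasurableSet)
      (by
        intro a b hab ω hω
        simp only [Set.mem_setOf_eq] at hω ⊢
        have hcast : (a:ℝ) ≤ (b:ℝ) := by exact_mod_cast hab
        linarith)
      ⟨0, measure_ne_top μ _⟩
    rw [hempty, measure_empty] at h
    exact h
  have hseqR : Tendsto (fun n : ℕ => (μ {ω | f ω < -(n:ℝ)}).toReal) atTop (nhds 0) := by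
    have := (ENNReal.tendsto_toReal (by simp : (0:ℝ≥0∞) ≠ ⊤)).comp hseq
    simpa [Function.comp_def] using this
  rw [Metric.tendsto_atTop] at hseqR ⊢
  intro ε hε
  obtain ⟨N, hN⟩ := hseqR ε hε
  refine ⟨N, fun x hx => ?_⟩
  have h1 := hN N le_rfl
  rw [Real.dist_eq, sub_zero, abs_of_nonneg ENNReal.toReal_nonneg] at h1 ⊢
  refine lt_of_le_of_lt ?_ h1
  exact ENNReal.toReal_mono (measure_ne_top μ _)
    (measure_mono (fun ω hω => lt_of_lt_of_le hω (neg_le_neg hx)))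

section XiLemmas

variable {ξ : ℕ → Ω → ℝ}

lemma partialSum_zero (ω : Ω) : partialSum ξ 0 ω = 0 := by
  simp [partialSum]

lemma partialSum_one : partialSum ξ 1 = ξ 1 := by
  funext ω
  simp [partialSum]

lemma partialSum_succ (k : ℕ) (ω : Ω) :
    partialSum ξ (k+1) ω = partialSum ξ k ω + ξ (k+1) ω := by
  unfold partialSum
  rw [Finset.sum_Icc_succ_top (Nat.le_add_left 1 k)]

lemma maxSum_zero (ω : Ω) : maxSum ξ 0 ω = 0 := by
  simp [maxSum, partialSum_zero]

lemma maxSum_succ (n : ℕ) (ω : Ω) :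
    maxSum ξ (n+1) ω = max (partialSum ξ (n+1) ω) (maxSum ξ n ω) := by
  apply le_antisymm
  · apply Finset.sup'_le
    intro k hk
    rcases Nat.lt_succ_iff_lt_or_eq.1 (Finset.mem_range.1 hk) with h | h
    · refine le_trans ?_ (le_max_right _ _)
      exact Finset.le_sup' (fun j => partialSum ξ j ω) (Finset.mem_range.2 h)
    · subst h
      exact le_max_left _ _
  · apply max_le
    · exact Finset.le_sup' (fun j => partialSum ξ j ω)
        (Finset.mem_range.2 (Nat.lt_succ_self _))
    · apply Finset.sup'_le
      intro k hk
      exact Finset.le_sup' (fun j => partialSum ξ j ω)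
        (Finset.mem_range.2 (lt_trans (Finset.mem_range.1 hk) (Nat.lt_succ_self _)))

lemma meas_partialSum (hmeas : ∀ k, Measurable (ξ k)) (k : ℕ) :
    Measurable (partialSum ξ k) := by
  unfold partialSum
  exact Finset.measurable_sum _ (fun i _ => hmeas i)

lemma meas_maxSum (hmeas : ∀ k, Measurable (ξ k)) (n : ℕ) :
    Measurable (maxSum ξ n) := by
  induction n with
  | zero =>
    have : maxSum ξ 0 = fun _ => (0:ℝ) := funext maxSum_zero
    rw [this]; exact measurable_const
  | succ n ih =>
    have : maxSum ξ (n+1) = fun ω => max (partialSum ξ (n+1) ω) (maxSum ξ n ω) :=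
      funext (maxSum_succ n)
    rw [this]
    exact (meas_partialSum hmeas (n+1)).max ih

lemma maxSum_nonneg (n : ℕ) (ω : Ω) : 0 ≤ maxSum ξ n ω := by
  have h0 : (0:ℕ) ∈ Finset.range (n+1) := Finset.mem_range.2 (Nat.succ_pos n)
  have := Finset.le_sup' (fun k => partialSum ξ k ω) h0
  rw [partialSum_zero] at this
  exact this

lemma partialSum_le_maxSum {n k : ℕ} (hk : k ≤ n) (ω : Ω) :
    partialSum ξ k ω ≤ maxSum ξ n ω :=
  Finset.le_sup' (fun j => partialSum ξ j ω) (Finset.mem_range.2 (Nat.lt_succ_of_le hk))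

/-- single big jump : if a partial sum exceeds `z`, some increment exceeds `z / j`. -/
lemma exists_big_jump {j : ℕ} (hj : 1 ≤ j) {z : ℝ} (ω : Ω)
    (h : partialSum ξ j ω > z) : ∃ i ∈ Finset.Icc 1 j, ξ i ω > z / j := by
  by_contra hcon
  push_neg at hcon
  have hsum : partialSum ξ j ω ≤ (Finset.Icc 1 j).card • (z / j) :=
    Finset.sum_le_card_nsmul _ _ _ (fun i hi => hcon i hi)
  rw [Nat.card_Icc] at hsum
  simp only [Nat.add_sub_cancel, nsmul_eq_mul] at hsum
  have hj0 : (j:ℝ) ≠ 0 := by positivity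
  rw [mul_div_cancel₀ z hj0] at hsum
  linarith

/-- if the running maximum exceeds `z > 0` it is attained at some index in `[1, n]`. -/
lemma exists_max_index {n : ℕ} {z : ℝ} (hz : 0 < z) (ω : Ω)
    (h : maxSum ξ n ω > z) :
    ∃ j ∈ Finset.Icc 1 n, partialSum ξ j ω > z ∧ partialSum ξ j ω = maxSum ξ n ω := by
  obtain ⟨j, hj, hje⟩ := Finset.exists_mem_eq_sup' Finset.nonempty_range_add_one
    (fun k => partialSum ξ k ω)
  have hjn : j ≤ n := Nat.lt_succ_iff.1 (Finset.mem_range.1 hj)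
  have hje' : maxSum ξ n ω = partialSum ξ j ω := hje
  have hgt : partialSum ξ j ω > z := by rw [← hje']; exact h
  have hj1 : 1 ≤ j := by
    by_contra hc
    push_neg at hc
    interval_cases j
    · rw [partialSum_zero] at hgt; linarith
  exact ⟨j, Finset.mem_Icc.2 ⟨hj1, hjn⟩, hgt, hje'.symm⟩

end XiLemmas


section P2
variable {Ω : Type*} [MeasurableSpace Ω] {μ : Measure Ω} [IsProbabilityMeasure μ]
variable {ξ : ℕ → Ω → ℝ}

lemma toReal_add3 {a b c : ℝ≥0∞} (ha : a ≠ ⊤) (hb : b ≠ ⊤) (hc : c ≠ ⊤) :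
    (a + b + c).toReal = a.toReal + b.toReal + c.toReal := by
  rw [ENNReal.toReal_add (ENNReal.add_ne_top.2 ⟨ha, hb⟩) hc, ENNReal.toReal_add ha hb]

lemma tail_eq (hmeas : ∀ k, Measurable (ξ k))
    (hident : ∀ k : ℕ, 1 ≤ k → Measure.map (ξ k) μ = Measure.map (ξ 1) μ)
    {i : ℕ} (hi : 1 ≤ i) (c : ℝ) : μ {ω | ξ i ω > c} = μ {ω | ξ 1 ω > c} := by
  have h1 : {ω | ξ i ω > c} = ξ i ⁻¹' (Set.Ioi c) := rfl
  have h2 : {ω | ξ 1 ω > c} = ξ 1 ⁻¹' (Set.Ioi c) := rfl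
  rw [h1, h2, ← Measure.map_apply (hmeas i) measurableSet_Ioi,
    ← Measure.map_apply (hmeas 1) measurableSet_Ioi, hident i hi]

lemma ltail_eq (hmeas : ∀ k, Measurable (ξ k))
    (hident : ∀ k : ℕ, 1 ≤ k → Measure.map (ξ k) μ = Measure.map (ξ 1) μ)
    {i : ℕ} (hi : 1 ≤ i) (c : ℝ) : μ {ω | ξ i ω < c} = μ {ω | ξ 1 ω < c} := by
  have h1 : {ω | ξ i ω < c} = ξ i ⁻¹' (Set.Iio c) := rfl
  have h2 : {ω | ξ 1 ω < c} = ξ 1 ⁻¹' (Set.Iio c) := rfl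
  rw [h1, h2, ← Measure.map_apply (hmeas i) measurableSet_Iio,
    ← Measure.map_apply (hmeas 1) measurableSet_Iio, hident i hi]

lemma indep_pS (hindep : iIndepFun ξ μ)
    (hmeas : ∀ k, Measurable (ξ k)) (k : ℕ) :
    IndepFun (partialSum ξ k) (ξ (k+1)) μ := by
  have h := hindep.indepFun_finset_sum_of_notMem hmeas
    (show (k+1) ∉ Finset.Icc 1 k by simp)
  have he : (∑ j ∈ Finset.Icc 1 k, ξ j) = partialSum ξ k := by
    funext ω
    rw [Finset.sum_apply]
    rfl
  rwa [he] at h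

lemma tail_UP (hindep : iIndepFun ξ μ)
    (hmeas : ∀ k, Measurable (ξ k))
    (hident : ∀ k : ℕ, 1 ≤ k → Measure.map (ξ k) μ = Measure.map (ξ 1) μ)
    (k : ℕ) (w s : ℝ) :
    (μ {ω | partialSum ξ (k+1) ω > w}).toReal ≤
      (μ {ω | partialSum ξ k ω > w - s}).toReal + (μ {ω | ξ 1 ω > w - s}).toReal +
      (μ {ω | partialSum ξ k ω > s}).toReal * (μ {ω | ξ 1 ω > s}).toReal := by
  have hind := indep_pS hindep hmeas k
  have hincl : {ω | partialSum ξ (k+1) ω > w} ⊆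
      ({ω | partialSum ξ k ω > w - s} ∪ {ω | ξ (k+1) ω > w - s}) ∪
      ({ω | partialSum ξ k ω > s} ∩ {ω | ξ (k+1) ω > s}) := by
    intro ω hω
    simp only [Set.mem_setOf_eq, Set.mem_union, Set.mem_inter_iff] at *
    rw [partialSum_succ] at hω
    by_cases h1 : partialSum ξ k ω > w - s
    · exact Or.inl (Or.inl h1)
    by_cases h2 : ξ (k+1) ω > w - s
    · exact Or.inl (Or.inr h2)
    push_neg at h1 h2
    exact Or.inr ⟨by linarith, by linarith⟩
  have hm1 : μ {ω | partialSum ξ (k+1) ω > w} ≤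
      μ {ω | partialSum ξ k ω > w - s} + μ {ω | ξ (k+1) ω > w - s} +
      μ ({ω | partialSum ξ k ω > s} ∩ {ω | ξ (k+1) ω > s}) :=
    le_trans (measure_mono hincl)
      (le_trans (measure_union_le _ _) (add_le_add_left (measure_union_le _ _) _))
  have hprod : μ ({ω | partialSum ξ k ω > s} ∩ {ω | ξ (k+1) ω > s}) =
      μ {ω | partialSum ξ k ω > s} * μ {ω | ξ (k+1) ω > s} :=
    hind.measure_inter_preimage_eq_mul _ _ measurableSet_Ioi measurableSet_Ioi
  have hg1 : μ {ω | ξ (k+1) ω > w - s} = μ {ω | ξ 1 ω > w - s} :=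
    tail_eq hmeas hident (Nat.le_add_left 1 k) _
  have hg2 : μ {ω | ξ (k+1) ω > s} = μ {ω | ξ 1 ω > s} :=
    tail_eq hmeas hident (Nat.le_add_left 1 k) _
  calc (μ {ω | partialSum ξ (k+1) ω > w}).toReal
      ≤ (μ {ω | partialSum ξ k ω > w - s} + μ {ω | ξ (k+1) ω > w - s} +
        μ ({ω | partialSum ξ k ω > s} ∩ {ω | ξ (k+1) ω > s})).toReal := by
        apply ENNReal.toReal_mono _ hm1
        exact ENNReal.add_ne_top.2 ⟨ENNReal.add_ne_top.2
          ⟨measure_ne_top μ _, measure_ne_top μ _⟩, measure_ne_top μ _⟩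
  _ = (μ {ω | partialSum ξ k ω > w - s}).toReal + (μ {ω | ξ 1 ω > w - s}).toReal +
      (μ {ω | partialSum ξ k ω > s}).toReal * (μ {ω | ξ 1 ω > s}).toReal := by
      rw [toReal_add3 (measure_ne_top μ _) (measure_ne_top μ _) (measure_ne_top μ _),
        hg1, hprod, hg2, ENNReal.toReal_mul]

lemma one_sub_ltail (hf : Measurable f) (s : ℝ) :
    (μ {ω | f ω ≥ -s}).toReal = 1 - (μ {ω | f ω < -s}).toReal := by
  have hcompl : {ω | f ω ≥ -s} = {ω | f ω < -s}ᶜ := by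
    ext ω
    simp only [Set.mem_setOf_eq, Set.mem_compl_iff, not_lt, ge_iff_le]
  rw [hcompl, prob_compl_eq_one_sub (measurableSet_lt hf measurable_const),
    ENNReal.toReal_sub_of_le prob_le_one ENNReal.one_ne_top, ENNReal.toReal_one]

lemma tail_LOW (hindep : iIndepFun ξ μ)
    (hmeas : ∀ k, Measurable (ξ k))
    (hident : ∀ k : ℕ, 1 ≤ k → Measure.map (ξ k) μ = Measure.map (ξ 1) μ)
    (k : ℕ) (w s : ℝ) :
    (μ {ω | partialSum ξ k ω > w+s}).toReal * (1 - (μ {ω | partialSum ξ 1 ω < -s}).toReal) +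
      (μ {ω | ξ 1 ω > w+s}).toReal * (1 - (μ {ω | partialSum ξ k ω < -s}).toReal) -
      (μ {ω | partialSum ξ k ω > w+s}).toReal * (μ {ω | ξ 1 ω > w+s}).toReal ≤
    (μ {ω | partialSum ξ (k+1) ω > w}).toReal := by
  have hind := indep_pS hindep hmeas k
  have hfm : Measurable (partialSum ξ k) := meas_partialSum hmeas k
  have hgm : Measurable (ξ (k+1)) := hmeas (k+1)
  set A := {ω | partialSum ξ k ω > w+s} ∩ {ω | ξ (k+1) ω ≥ -s} with hA
  set Bs := {ω | ξ (k+1) ω > w+s} ∩ {ω | partialSum ξ k ω ≥ -s} with hB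
  have hBmeas : MeasurableSet Bs :=
    (measurableSet_lt measurable_const hgm).inter (measurableSet_le measurable_const hfm)
  have hsub : A ∪ Bs ⊆ {ω | partialSum ξ (k+1) ω > w} := by
    intro ω hω
    simp only [hA, hB, Set.mem_union, Set.mem_inter_iff, Set.mem_setOf_eq] at hω
    simp only [Set.mem_setOf_eq]
    rw [partialSum_succ]
    rcases hω with ⟨h1, h2⟩ | ⟨h1, h2⟩ <;> linarith
  have hABsub : A ∩ Bs ⊆ {ω | partialSum ξ k ω > w+s} ∩ {ω | ξ (k+1) ω > w+s} := by
    rintro ω ⟨⟨h1, _⟩, ⟨h3, _⟩⟩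
    exact ⟨h1, h3⟩
  have hAB := measure_union_add_inter (μ := μ) A hBmeas
  have hAprod : μ A = μ {ω | partialSum ξ k ω > w+s} * μ {ω | ξ (k+1) ω ≥ -s} :=
    hind.measure_inter_preimage_eq_mul _ _ measurableSet_Ioi measurableSet_Ici
  have hBprod : μ Bs = μ {ω | ξ (k+1) ω > w+s} * μ {ω | partialSum ξ k ω ≥ -s} :=
    hind.symm.measure_inter_preimage_eq_mul _ _ measurableSet_Ioi measurableSet_Ici
  have hABprod : μ ({ω | partialSum ξ k ω > w+s} ∩ {ω | ξ (k+1) ω > w+s}) =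
      μ {ω | partialSum ξ k ω > w+s} * μ {ω | ξ (k+1) ω > w+s} :=
    hind.measure_inter_preimage_eq_mul _ _ measurableSet_Ioi measurableSet_Ioi
  -- real versions
  have t1 : (μ (A ∪ Bs)).toReal ≤ (μ {ω | partialSum ξ (k+1) ω > w}).toReal :=
    ENNReal.toReal_mono (measure_ne_top μ _) (measure_mono hsub)
  have t2 : (μ (A ∩ Bs)).toReal ≤
      (μ {ω | partialSum ξ k ω > w+s}).toReal * (μ {ω | ξ (k+1) ω > w+s}).toReal := by
    rw [← ENNReal.toReal_mul, ← hABprod]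
    exact ENNReal.toReal_mono (measure_ne_top μ _) (measure_mono hABsub)
  have t3 : (μ A).toReal = (μ {ω | partialSum ξ k ω > w+s}).toReal *
      (1 - (μ {ω | ξ (k+1) ω < -s}).toReal) := by
    rw [hAprod, ENNReal.toReal_mul, one_sub_ltail hgm]
  have t4 : (μ Bs).toReal = (μ {ω | ξ (k+1) ω > w+s}).toReal *
      (1 - (μ {ω | partialSum ξ k ω < -s}).toReal) := by
    rw [hBprod, ENNReal.toReal_mul, one_sub_ltail hfm]
  have t5 : (μ (A ∪ Bs)).toReal + (μ (A ∩ Bs)).toReal = (μ A).toReal + (μ Bs).toReal := by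
    rw [← ENNReal.toReal_add (measure_ne_top μ _) (measure_ne_top μ _),
      ← ENNReal.toReal_add (measure_ne_top μ _) (measure_ne_top μ _), hAB]
  have hg1 : μ {ω | ξ (k+1) ω > w+s} = μ {ω | ξ 1 ω > w+s} :=
    tail_eq hmeas hident (Nat.le_add_left 1 k) _
  have hg2 : μ {ω | ξ (k+1) ω < -s} = μ {ω | partialSum ξ 1 ω < -s} := by
    rw [partialSum_one]
    exact ltail_eq hmeas hident (Nat.le_add_left 1 k) _
  rw [hg1] at t2 t4
  rw [hg2] at t3
  linarith
end P2

section P3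
variable {Ω : Type*} [MeasurableSpace Ω] {μ : Measure Ω} [IsProbabilityMeasure μ]
variable {ξ : ℕ → Ω → ℝ}

lemma tail_HT (hmeas : ∀ k, Measurable (ξ k))
    (hident : ∀ k : ℕ, 1 ≤ k → Measure.map (ξ k) μ = Measure.map (ξ 1) μ)
    {k : ℕ} (hk : 1 ≤ k) (x : ℝ) :
    (μ {ω | partialSum ξ k ω > x}).toReal ≤ k * (μ {ω | ξ 1 ω > x / k}).toReal := by
  have hincl : {ω | partialSum ξ k ω > x} ⊆ ⋃ i ∈ Finset.Icc 1 k, {ω | ξ i ω > x / k} := by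
    intro ω hω
    obtain ⟨i, hi, hgt⟩ := exists_big_jump hk ω hω
    exact Set.mem_biUnion hi hgt
  have hm := le_trans (measure_mono hincl) (measure_biUnion_finset_le (μ := μ) _ _)
  have heq : ∀ i ∈ Finset.Icc 1 k, μ {ω | ξ i ω > x / k} = μ {ω | ξ 1 ω > x / k} :=
    fun i hi => tail_eq hmeas hident (Finset.mem_Icc.1 hi).1 _
  calc (μ {ω | partialSum ξ k ω > x}).toReal
      ≤ (∑ i ∈ Finset.Icc 1 k, μ {ω | ξ i ω > x / k}).toReal := by
        apply ENNReal.toReal_mono _ hm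
        exact (ENNReal.sum_lt_top.2 (fun i _ => measure_lt_top μ _)).ne
  _ = ∑ i ∈ Finset.Icc 1 k, (μ {ω | ξ i ω > x / k}).toReal :=
        ENNReal.toReal_sum (fun i _ => measure_ne_top μ _)
  _ = ∑ _i ∈ Finset.Icc 1 k, (μ {ω | ξ 1 ω > x / k}).toReal :=
        Finset.sum_congr rfl (fun i hi => by rw [heq i hi])
  _ = k * (μ {ω | ξ 1 ω > x / k}).toReal := by
        rw [Finset.sum_const, Nat.card_Icc]
        simp [nsmul_eq_mul]

lemma tail_QT (hmeas : ∀ k, Measurable (ξ k))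
    (hident : ∀ k : ℕ, 1 ≤ k → Measure.map (ξ k) μ = Measure.map (ξ 1) μ)
    {n : ℕ} (hn : 1 ≤ n) {x : ℝ} (hx : 0 < x) :
    (μ {ω | maxSum ξ n ω > x}).toReal ≤ n * (μ {ω | ξ 1 ω > x / n}).toReal := by
  have hincl : {ω | maxSum ξ n ω > x} ⊆ ⋃ i ∈ Finset.Icc 1 n, {ω | ξ i ω > x / n} := by
    intro ω hω
    obtain ⟨j, hj, hgt, _⟩ := exists_max_index hx ω hω
    obtain ⟨hj1, hjn⟩ := Finset.mem_Icc.1 hj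
    obtain ⟨i, hi, higt⟩ := exists_big_jump hj1 ω hgt
    obtain ⟨hi1, hij⟩ := Finset.mem_Icc.1 hi
    have hdiv : x / n ≤ x / j := by
      apply div_le_div_of_nonneg_left hx.le
      · exact_mod_cast hj1
      · exact_mod_cast hjn
    exact Set.mem_biUnion (Finset.mem_Icc.2 ⟨hi1, le_trans hij hjn⟩)
      (lt_of_le_of_lt hdiv higt)
  have hm := le_trans (measure_mono hincl) (measure_biUnion_finset_le (μ := μ) _ _)
  calc (μ {ω | maxSum ξ n ω > x}).toReal
      ≤ (∑ i ∈ Finset.Icc 1 n, μ {ω | ξ i ω > x / n}).toReal := by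
        apply ENNReal.toReal_mono _ hm
        exact (ENNReal.sum_lt_top.2 (fun i _ => measure_lt_top μ _)).ne
  _ = ∑ i ∈ Finset.Icc 1 n, (μ {ω | ξ i ω > x / n}).toReal :=
        ENNReal.toReal_sum (fun i _ => measure_ne_top μ _)
  _ = ∑ _i ∈ Finset.Icc 1 n, (μ {ω | ξ 1 ω > x / n}).toReal :=
        Finset.sum_congr rfl
          (fun i hi => by rw [tail_eq hmeas hident (Finset.mem_Icc.1 hi).1])
  _ = n * (μ {ω | ξ 1 ω > x / n}).toReal := by
        rw [Finset.sum_const, Nat.card_Icc]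
        simp [nsmul_eq_mul]

lemma tail_diff_eq {f : Ω → ℝ} (hf : Measurable f) {w z : ℝ} (hwz : w ≤ z) :
    (μ ({ω | f ω > w} \ {ω | f ω > z})).toReal =
      (μ {ω | f ω > w}).toReal - (μ {ω | f ω > z}).toReal := by
  have hsub : {ω | f ω > z} ⊆ {ω | f ω > w} := fun ω hω => lt_of_le_of_lt hwz hω
  rw [measure_diff hsub (measurableSet_lt measurable_const hf).nullMeasurableSet
    (measure_ne_top μ _),
    ENNReal.toReal_sub_of_le (measure_mono hsub) (measure_ne_top μ _)]

lemma tail_Qd (hmeas : ∀ k, Measurable (ξ k)) (n : ℕ) {w z : ℝ} (hw : 0 < w) (hwz : w ≤ z) :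
    (μ {ω | maxSum ξ n ω > w}).toReal - (μ {ω | maxSum ξ n ω > z}).toReal ≤
      ∑ k ∈ Finset.Icc 1 n,
        ((μ {ω | partialSum ξ k ω > w}).toReal - (μ {ω | partialSum ξ k ω > z}).toReal) := by
  rw [← tail_diff_eq (meas_maxSum hmeas n) hwz]
  have hincl : {ω | maxSum ξ n ω > w} \ {ω | maxSum ξ n ω > z} ⊆
      ⋃ k ∈ Finset.Icc 1 n, ({ω | partialSum ξ k ω > w} \ {ω | partialSum ξ k ω > z}) := by
    rintro ω ⟨hω1, hω2⟩
    simp only [Set.mem_setOf_eq, not_lt] at hω2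
    obtain ⟨j, hj, hgt, hje⟩ := exists_max_index hw ω hω1
    refine Set.mem_biUnion hj ⟨hgt, ?_⟩
    simp only [Set.mem_setOf_eq, not_lt]
    rw [hje]
    exact hω2
  have hm := le_trans (measure_mono hincl) (measure_biUnion_finset_le (μ := μ) _ _)
  calc (μ ({ω | maxSum ξ n ω > w} \ {ω | maxSum ξ n ω > z})).toReal
      ≤ (∑ k ∈ Finset.Icc 1 n,
          μ ({ω | partialSum ξ k ω > w} \ {ω | partialSum ξ k ω > z})).toReal := by
        apply ENNReal.toReal_mono _ hm
        exact (ENNReal.sum_lt_top.2 (fun i _ => measure_lt_top μ _)).ne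
  _ = ∑ k ∈ Finset.Icc 1 n,
        (μ ({ω | partialSum ξ k ω > w} \ {ω | partialSum ξ k ω > z})).toReal :=
        ENNReal.toReal_sum (fun i _ => measure_ne_top μ _)
  _ = ∑ k ∈ Finset.Icc 1 n,
        ((μ {ω | partialSum ξ k ω > w}).toReal - (μ {ω | partialSum ξ k ω > z}).toReal) :=
        Finset.sum_congr rfl
          (fun k _ => tail_diff_eq (meas_partialSum hmeas k) hwz)

end P3

section P4
variable {Ω : Type*} [MeasurableSpace Ω] {μ : Measure Ω} [IsProbabilityMeasure μ]
variable {ξ : ℕ → Ω → ℝ} {η : Ω → ℕ}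

/-- the running maximum as a function of the whole path vector -/
noncomputable def gmax (n : ℕ) (v : ℕ → ℝ) : ℝ :=
  (Finset.range (n + 1)).sup' Finset.nonempty_range_add_one
    (fun j => ∑ i ∈ Finset.Icc 1 j, v i)

lemma gmax_eq_maxSum (n : ℕ) (ω : Ω) : gmax n (fun k => ξ k ω) = maxSum ξ n ω := rfl

lemma meas_gmax (n : ℕ) : Measurable (gmax n) := by
  induction n with
  | zero =>
    have h : gmax 0 = fun _ => (0:ℝ) := by
      funext v
      exact maxSum_zero (ξ := fun k (_ : Unit) => v k) ()
    rw [h]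
    exact measurable_const
  | succ n ih =>
    have h : gmax (n+1) = fun v =>
        max (∑ i ∈ Finset.Icc 1 (n+1), v i) (gmax n v) := by
      funext v
      exact maxSum_succ (ξ := fun k (_ : Unit) => v k) n ()
    rw [h]
    exact (Finset.measurable_sum _ (fun i _ => measurable_pi_apply i)).max ih

lemma mixture (hmeas : ∀ k, Measurable (ξ k)) (hηmeas : Measurable η)
    (hηindep : IndepFun η (fun ω => fun k => ξ k ω) μ) (x : ℝ) :
    (μ {ω | maxSum ξ (η ω) ω > x}).toReal =
      ∑' n, (μ {ω | η ω = n}).toReal * (μ {ω | maxSum ξ n ω > x}).toReal := by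
  have hset : {ω | maxSum ξ (η ω) ω > x} =
      ⋃ n, ({ω | η ω = n} ∩ {ω | maxSum ξ n ω > x}) := by
    ext ω
    simp only [Set.mem_setOf_eq, Set.mem_iUnion, Set.mem_inter_iff]
    constructor
    · intro h
      exact ⟨η ω, rfl, h⟩
    · rintro ⟨n, hn, h⟩
      rwa [hn]
  have hmeasn : ∀ n : ℕ, MeasurableSet ({ω | η ω = n} ∩ {ω | maxSum ξ n ω > x}) :=
    fun n => (hηmeas (measurableSet_singleton n)).inter
      (measurableSet_lt measurable_const (meas_maxSum hmeas n))
  have hdisj : Pairwise (Function.onFun Disjoint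
      (fun n => {ω | η ω = n} ∩ {ω | maxSum ξ n ω > x})) := by
    intro m n hmn
    simp only [Function.onFun]
    apply Set.disjoint_left.2
    rintro ω ⟨h1, _⟩ ⟨h2, _⟩
    exact hmn (h1.symm.trans h2)
  rw [hset, measure_iUnion hdisj hmeasn,
    ENNReal.tsum_toReal_eq (fun n => measure_ne_top μ _)]
  congr 1
  funext n
  have hBn : MeasurableSet {v : ℕ → ℝ | gmax n v > x} :=
    measurableSet_lt measurable_const (meas_gmax n)
  have hprod := hηindep.measure_inter_preimage_eq_mul {n} {v : ℕ → ℝ | gmax n v > x}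
    (measurableSet_singleton n) hBn
  have hs1 : η ⁻¹' {n} = {ω | η ω = n} := rfl
  have hs2 : (fun ω => fun k => ξ k ω) ⁻¹' {v : ℕ → ℝ | gmax n v > x} =
      {ω | maxSum ξ n ω > x} := rfl
  rw [hs1, hs2] at hprod
  rw [hprod, ENNReal.toReal_mul]

lemma eta_partition (hηmeas : Measurable η) :
    (∑' n, μ {ω | η ω = n}) = 1 := by
  have hset : (⋃ n, {ω | η ω = n}) = Set.univ := by
    ext ω
    simp only [Set.mem_iUnion, Set.mem_setOf_eq, Set.mem_univ, iff_true]
    exact ⟨η ω, rfl⟩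
  have hdisj : Pairwise (Function.onFun Disjoint (fun n => {ω | η ω = n})) := by
    intro m n hmn
    apply Set.disjoint_left.2
    intro ω h1 h2
    exact hmn (h1.symm.trans h2)
  rw [← measure_iUnion hdisj (fun n => hηmeas (measurableSet_singleton n)), hset,
    measure_univ]

lemma pr_summable (hηmeas : Measurable η) :
    Summable (fun n => (μ {ω | η ω = n}).toReal) :=
  ENNReal.summable_toReal (by rw [eta_partition hηmeas]; exact ENNReal.one_ne_top)

lemma pr_tsum_one (hηmeas : Measurable η) :
    (∑' n, (μ {ω | η ω = n}).toReal) = 1 := by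
  rw [← ENNReal.tsum_toReal_eq (fun n => measure_ne_top μ _), eta_partition hηmeas]
  simp

lemma q_pos (hηmeas : Measurable η) (hηnondeg : μ {ω | η ω = 0} ≠ 1) :
    0 < (μ ({ω | η ω = 0}ᶜ)).toReal := by
  have h1 : μ {ω | η ω = 0} < 1 := lt_of_le_of_ne prob_le_one hηnondeg
  have h2 : μ ({ω | η ω = 0}ᶜ) = 1 - μ {ω | η ω = 0} :=
    prob_compl_eq_one_sub (hηmeas (measurableSet_singleton 0))
  rw [h2, ENNReal.toReal_sub_of_le h1.le ENNReal.one_ne_top, ENNReal.toReal_one]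
  have h3 : (μ {ω | η ω = 0}).toReal < 1 := by
    have := (ENNReal.toReal_lt_toReal (measure_ne_top μ _) ENNReal.one_ne_top).2 h1
    simpa using this
  linarith

lemma G_lower (hmeas : ∀ k, Measurable (ξ k)) (hηmeas : Measurable η)
    (hηindep : IndepFun η (fun ω => fun k => ξ k ω) μ) (x : ℝ) :
    (μ ({ω | η ω = 0}ᶜ)).toReal * (μ {ω | ξ 1 ω > x}).toReal ≤
      (μ {ω | maxSum ξ (η ω) ω > x}).toReal := by
  have hind1 : IndepFun η (ξ 1) μ :=
    hηindep.comp measurable_id (measurable_pi_apply 1)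
  have hincl : ({ω | η ω = 0}ᶜ) ∩ {ω | ξ 1 ω > x} ⊆ {ω | maxSum ξ (η ω) ω > x} := by
    rintro ω ⟨h1, h2⟩
    simp only [Set.mem_compl_iff, Set.mem_setOf_eq] at h1 h2 ⊢
    have hη1 : 1 ≤ η ω := Nat.one_le_iff_ne_zero.2 h1
    have hle := partialSum_le_maxSum (ξ := ξ) hη1 ω
    rw [partialSum_one] at hle
    exact lt_of_lt_of_le h2 hle
  have hprod := hind1.measure_inter_preimage_eq_mul ({0}ᶜ) (Set.Ioi x)
    (measurableSet_singleton 0).compl measurableSet_Ioi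
  have hs1 : η ⁻¹' ({0}ᶜ) = {ω | η ω = 0}ᶜ := rfl
  have hs2 : ξ 1 ⁻¹' (Set.Ioi x) = {ω | ξ 1 ω > x} := rfl
  rw [hs1, hs2] at hprod
  rw [← ENNReal.toReal_mul, ← hprod]
  exact ENNReal.toReal_mono (measure_ne_top μ _) (measure_mono hincl)

end P4

end RSM

set_option maxHeartbeats 1600000 in
/-- Corollary 2 -/
theorem randomly_stopped_maximum_of_sums_cvar_iid
    {Ω : Type*} [MeasurableSpace Ω] (μ : Measure Ω) [IsProbabilityMeasure μ]
    (ξ : ℕ → Ω → ℝ) (hmeas : ∀ k, Measurable (ξ k))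
    (hindep : iIndepFun ξ μ)
    (hident : ∀ k : ℕ, 1 ≤ k → Measure.map (ξ k) μ = Measure.map (ξ 1) μ)
    (η : Ω → ℕ) (hηmeas : Measurable η)
    (hηnondeg : μ {ω | η ω = 0} ≠ 1)
    (hηindep : IndepFun η (fun ω => fun k => ξ k ω) μ)
    (hpos : ∀ x : ℝ, 0 < (μ {ω | ξ 1 ω > x}).toReal)
    (hC : ConsistentlyVaryingTail (fun x => (μ {ω | ξ 1 ω > x}).toReal))
    (J p : ℝ)
    (hJ : Tendsto (fun y : ℝ =>
        -((1 / Real.log y) * Real.log (liminf (fun x : ℝ =>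
          (μ {ω | ξ 1 ω > x * y}).toReal / (μ {ω | ξ 1 ω > x}).toReal) atTop)))
      atTop (nhds J))
    (hp : J < p)
    (hmoment : Summable (fun n : ℕ => (n : ℝ) ^ (p + 1) * (μ {ω | η ω = n}).toReal)) :
    ConsistentlyVaryingTail (fun x => (μ {ω | maxSum ξ (η ω) ω > x}).toReal) := by
  have hH1 : (fun (x : ℝ) => (μ {ω | partialSum ξ 1 ω > x}).toReal) =
      (fun x => (μ {ω | ξ 1 ω > x}).toReal) := by
    funext x
    rw [show {ω | partialSum ξ 1 ω > x} = {ω | ξ 1 ω > x} by rw [RSM.partialSum_one]]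
  have hQ0 : ∀ x : ℝ, 0 < x → (μ {ω | maxSum ξ 0 ω > x}).toReal = 0 := by
    intro x hx
    have hempty : {ω | maxSum ξ 0 ω > x} = (∅ : Set Ω) := by
      ext ω
      simp only [Set.mem_setOf_eq, Set.mem_empty_iff_false, iff_false, not_lt]
      rw [RSM.maxSum_zero]
      linarith
    rw [hempty]
    simp
  exact RSM.main_analytic
    (fun x => (μ {ω | ξ 1 ω > x}).toReal)
    (fun k x => (μ {ω | partialSum ξ k ω > x}).toReal)
    (fun n x => (μ {ω | maxSum ξ n ω > x}).toReal)
    (fun x => (μ {ω | maxSum ξ (η ω) ω > x}).toReal)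
    (fun j x => (μ {ω | partialSum ξ j ω < -x}).toReal)
    (fun n => (μ {ω | η ω = n}).toReal)
    ((μ ({ω | η ω = 0}ᶜ)).toReal)
    J p
    (RSM.tail_anti (ξ 1))
    hpos
    (RSM.tail_le_one (ξ 1))
    (RSM.tail_tendsto_zero (hmeas 1))
    hC
    hJ
    hp
    hH1
    (fun k => RSM.tail_anti (partialSum ξ k))
    (fun k x => RSM.tail_nonneg _ x)
    (fun k _ w s => RSM.tail_UP hindep hmeas hident k w s)
    (fun k _ w s => RSM.tail_LOW hindep hmeas hident k w s)
    (fun k _ => RSM.ltail_tendsto_zero (RSM.meas_partialSum hmeas k))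
    (fun k x => ENNReal.toReal_nonneg)
    (fun k hk x _ => RSM.tail_HT hmeas hident hk x)
    (fun n hn x hx => RSM.tail_QT hmeas hident hn hx)
    hQ0
    (fun n w z hw hwz => RSM.tail_Qd hmeas n hw hwz)
    (fun n x => RSM.tail_nonneg _ x)
    (fun n x => RSM.tail_le_one _ x)
    (RSM.pr_summable hηmeas)
    (fun n => ENNReal.toReal_nonneg)
    (le_of_eq (RSM.pr_tsum_one hηmeas))
    hmoment
    (fun x => RSM.mixture hmeas hηmeas hηindep x)
    (RSM.q_pos hηmeas hηnondeg)
    (fun x => RSM.G_lower hmeas hηmeas hηindep x)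
    (RSM.tail_anti (fun ω => maxSum ξ (η ω) ω))
end

section
/- Let ξ = (1+U)·2^G where U and G are independent, U is uniformly distributed on [0,1], and G is geometric with parameter q ∈ (0,1) (P(G = l) = (1−q)q^l for l = 0,1,2,…). Then the distribution function of ξ has a consistently varying tail but does not have a regularly varying tail. -/
open Filter MeasureTheory ProbabilityTheory

lemma my_tail_formula
    {Ω : Type*} [MeasurableSpace Ω] (μ : Measure Ω) [IsProbabilityMeasure μ]
    (U : Ω → ℝ) (G : Ω → ℕ) (hU : Measurable U) (hG : Measurable G)
    (hUG : IndepFun U G μ)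
    (hUlaw : Measure.map U μ = MeasureTheory.volume.restrict (Set.Icc (0 : ℝ) 1))
    (q : ℝ) (hq : q ∈ Set.Ioo (0 : ℝ) 1)
    (hGlaw : ∀ l : ℕ, μ {ω | G ω = l} = ENNReal.ofReal ((1 - q) * q ^ l))
    (m : ℕ) (t : ℝ) (ht1 : 1 ≤ t) (ht2 : t < 2) :
    μ {ω | (1 + U ω) * 2 ^ (G ω) > t * 2 ^ m}
      = ENNReal.ofReal (q ^ m * (2 - q - (1 - q) * t)) := by
  obtain ⟨hq0, hq1⟩ := hq
  set A : Set Ω := U ⁻¹' Set.Icc (0:ℝ) 1 with hA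
  have hAc : μ Aᶜ = 0 := by
    have h1 : Aᶜ = U ⁻¹' (Set.Icc (0:ℝ) 1)ᶜ := rfl
    rw [h1, ← Measure.map_apply hU measurableSet_Icc.compl, hUlaw,
      Measure.restrict_apply measurableSet_Icc.compl]
    simp
  set B : Set Ω := G ⁻¹' Set.Ioi m with hB
  set C : Set Ω := U ⁻¹' Set.Ioi (t-1) ∩ G ⁻¹' {m} with hC
  have hkey : {ω | (1 + U ω) * 2 ^ (G ω) > t * 2 ^ m} ∩ A = (B ∪ C) ∩ A := by
    ext ω
    simp only [Set.mem_inter_iff, Set.mem_setOf_eq, Set.mem_preimage, Set.mem_Icc,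
      Set.mem_union, Set.mem_Ioi, Set.mem_singleton_iff, hA, hB, hC, gt_iff_lt]
    constructor
    · rintro ⟨hgt, hu0, hu1⟩
      refine ⟨?_, hu0, hu1⟩
      rcases lt_trichotomy (G ω) m with h1 | h1 | h1
      · exfalso
        have h2 : (2:ℝ) ^ (G ω + 1) ≤ 2 ^ m := pow_le_pow_right₀ one_le_two h1
        have h3 : (0:ℝ) < 2 ^ (G ω) := by positivity
        have h4 : (0:ℝ) < 2 ^ m := by positivity
        rw [pow_succ] at h2
        nlinarith
      · right
        refine ⟨?_, h1⟩
        have h4 : (0:ℝ) < 2 ^ m := by positivity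
        rw [h1] at hgt
        nlinarith
      · left; exact h1
    · rintro ⟨h1, hu0, hu1⟩
      refine ⟨?_, hu0, hu1⟩
      rcases h1 with h1 | ⟨h1, h2⟩
      · have h2 : (2:ℝ) ^ (m + 1) ≤ 2 ^ (G ω) := pow_le_pow_right₀ one_le_two h1
        have h3 : (0:ℝ) < 2 ^ (G ω) := by positivity
        have h4 : (0:ℝ) < 2 ^ m := by positivity
        rw [pow_succ] at h2
        nlinarith
      · have h4 : (0:ℝ) < 2 ^ m := by positivity
        rw [h2]
        nlinarith
  have hμE : μ {ω | (1 + U ω) * 2 ^ (G ω) > t * 2 ^ m} = μ (B ∪ C) := by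
    rw [← measure_inter_conull (s := {ω | (1 + U ω) * 2 ^ (G ω) > t * 2 ^ m}) hAc, hkey,
      measure_inter_conull hAc]
  have hdisj : Disjoint B C := by
    rw [Set.disjoint_left]
    rintro ω hωB ⟨_, hωC⟩
    simp only [hB, Set.mem_preimage, Set.mem_Ioi] at hωB
    simp only [Set.mem_preimage, Set.mem_singleton_iff] at hωC
    omega
  have hCmeas : MeasurableSet C := (hU measurableSet_Ioi).inter (hG (measurableSet_singleton m))
  have hBmeas : MeasurableSet B := hG measurableSet_Ioi
  have hμB : μ B = ENNReal.ofReal (q ^ (m+1)) := by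
    have hBc : Bᶜ = ⋃ l ∈ Finset.range (m+1), {ω | G ω = l} := by
      ext ω
      simp only [hB, Set.mem_compl_iff, Set.mem_preimage, Set.mem_Ioi, Set.mem_iUnion,
        Finset.mem_range, Set.mem_setOf_eq, not_lt]
      constructor
      · intro h; exact ⟨G ω, by omega, rfl⟩
      · rintro ⟨l, hl, rfl⟩; omega
    have hμBc : μ Bᶜ = ENNReal.ofReal (1 - q ^ (m+1)) := by
      have hpd : (↑(Finset.range (m+1)) : Set ℕ).PairwiseDisjoint
          (fun l => {ω | G ω = l}) := by
        intro i _ j _ hij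
        simp only [Function.onFun, Set.disjoint_left, Set.mem_setOf_eq]
        rintro ω rfl h; exact hij h
      rw [hBc, measure_biUnion_finset hpd (fun l _ => hG (measurableSet_singleton l))]
      · have : ∀ l ∈ Finset.range (m+1), μ {ω | G ω = l} = ENNReal.ofReal ((1-q) * q ^ l) :=
          fun l _ => hGlaw l
        rw [Finset.sum_congr rfl this, ← ENNReal.ofReal_sum_of_nonneg
          (fun l _ => by nlinarith [pow_pos hq0 l, pow_nonneg hq0.le l])]
        congr 1
        rw [← Finset.mul_sum, geom_sum_eq (by linarith : q ≠ 1)]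
        have : q - 1 ≠ 0 := by linarith
        field_simp
        ring
    have h1 : μ B = 1 - μ Bᶜ := by
      rw [← prob_compl_eq_one_sub hBmeas.compl, compl_compl]
    rw [h1, hμBc, ← ENNReal.ofReal_one, ← ENNReal.ofReal_sub]
    · norm_num
    · have : q ^ (m+1) ≤ 1 := pow_le_one₀ hq0.le hq1.le
      linarith
  have hμC : μ C = ENNReal.ofReal ((2 - t) * ((1-q) * q ^ m)) := by
    rw [hC, hUG.measure_inter_preimage_eq_mul _ _ measurableSet_Ioi (measurableSet_singleton m)]
    have h1 : μ (U ⁻¹' Set.Ioi (t-1)) = ENNReal.ofReal (2 - t) := by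
      rw [← Measure.map_apply hU measurableSet_Ioi, hUlaw,
        Measure.restrict_apply measurableSet_Ioi]
      have h2 : Set.Ioi (t-1) ∩ Set.Icc (0:ℝ) 1 = Set.Ioc (t-1) 1 := by
        ext x
        simp only [Set.mem_inter_iff, Set.mem_Ioi, Set.mem_Icc, Set.mem_Ioc]
        constructor
        · rintro ⟨h3, h4, h5⟩; exact ⟨h3, h5⟩
        · rintro ⟨h3, h4⟩; exact ⟨h3, by linarith, h4⟩
      rw [h2, Real.volume_Ioc]
      congr 1; ring
    have h2 : G ⁻¹' {m} = {ω | G ω = m} := rfl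
    rw [h1, h2, hGlaw m, ← ENNReal.ofReal_mul (by linarith)]
  rw [hμE, measure_union hdisj hCmeas, hμB, hμC,
    ← ENNReal.ofReal_add (by positivity) (mul_nonneg (by linarith) (mul_nonneg (by linarith) (pow_nonneg hq0.le m)))]
  congr 1
  ring

lemma my_decomp (x : ℝ) (hx : 1 ≤ x) :
    ∃ (m : ℕ) (t : ℝ), 1 ≤ t ∧ t < 2 ∧ x = t * 2 ^ m := by
  set m := ⌊Real.logb 2 x⌋₊ with hm
  have hx0 : (0:ℝ) < x := by linarith
  have hlb : 0 ≤ Real.logb 2 x := Real.logb_nonneg one_lt_two hx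
  have hpow : (0:ℝ) < 2 ^ m := by positivity
  have h1 : (2:ℝ) ^ m ≤ x := by
    have h2 : (m:ℝ) ≤ Real.logb 2 x := Nat.floor_le hlb
    calc (2:ℝ) ^ m = (2:ℝ) ^ (m:ℝ) := (Real.rpow_natCast 2 m).symm
    _ ≤ (2:ℝ) ^ (Real.logb 2 x) := Real.rpow_le_rpow_of_exponent_le one_le_two h2
    _ = x := Real.rpow_logb (by norm_num) (by norm_num) hx0
  have h2 : x < 2 ^ (m+1) := by
    have h3 : Real.logb 2 x < (m:ℝ) + 1 := Nat.lt_floor_add_one _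
    calc x = (2:ℝ) ^ (Real.logb 2 x) := (Real.rpow_logb (by norm_num) (by norm_num) hx0).symm
    _ < (2:ℝ) ^ ((m:ℝ) + 1) := Real.rpow_lt_rpow_of_exponent_lt one_lt_two h3
    _ = 2 ^ (m+1) := by rw [← Real.rpow_natCast 2 (m+1)]; norm_num
  refine ⟨m, x / 2 ^ m, ?_, ?_, ?_⟩
  · rw [le_div_iff₀ hpow]; linarith
  · rw [div_lt_iff₀ hpow]; rw [pow_succ] at h2; linarith
  · rw [div_mul_cancel₀]; positivity

lemma my_notreg (T : ℝ → ℝ) (q : ℝ) (hq0 : 0 < q) (hq1 : q < 1)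
    (hT : ∀ (m : ℕ) (t : ℝ), 1 ≤ t → t < 2 → T (t * 2 ^ m) = q ^ m * (2 - q - (1 - q) * t)) :
    ¬ ∃ α : ℝ, 0 ≤ α ∧ ∀ y : ℝ, 0 < y →
      Tendsto (fun x : ℝ => T (x * y) / T x) atTop (nhds (y ^ (-α))) := by
  rintro ⟨α, hα, hlim⟩
  have hqne : ∀ l : ℕ, q ^ l ≠ 0 := fun l => pow_ne_zero _ (ne_of_gt hq0)
  have ha : Tendsto (fun l : ℕ => (2:ℝ) ^ l) atTop atTop :=
    tendsto_pow_atTop_atTop_of_one_lt one_lt_two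
  have hA := (hlim (3/2) (by norm_num)).comp ha
  have heq1 : ((fun x : ℝ => T (x * (3/2)) / T x) ∘ fun l : ℕ => (2:ℝ) ^ l)
      = fun _ : ℕ => (1 + q) / 2 := by
    funext l
    show T ((2:ℝ) ^ l * (3/2)) / T ((2:ℝ) ^ l) = (1 + q) / 2
    have e1 : (2:ℝ) ^ l * (3/2) = (3/2) * 2 ^ l := by ring
    have e2 : (2:ℝ) ^ l = 1 * 2 ^ l := by ring
    rw [e1, hT l (3/2) (by norm_num) (by norm_num), e2, hT l 1 le_rfl one_lt_two]
    have hY : q ^ l * (2 - q - (1 - q) * 1) ≠ 0 := by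
      have : (2 - q - (1 - q) * 1 : ℝ) = 1 := by ring
      rw [this, mul_one]; exact hqne l
    rw [div_eq_div_iff hY (by norm_num : (2:ℝ) ≠ 0)]
    ring
  rw [heq1] at hA
  have hval1 : (1 + q) / 2 = (3/2 : ℝ) ^ (-α) := tendsto_nhds_unique tendsto_const_nhds hA
  have hb : Tendsto (fun l : ℕ => (4/3 : ℝ) * 2 ^ l) atTop atTop :=
    ha.const_mul_atTop (by norm_num)
  have hB := (hlim (3/2) (by norm_num)).comp hb
  have heq2 : ((fun x : ℝ => T (x * (3/2)) / T x) ∘ fun l : ℕ => (4/3 : ℝ) * 2 ^ l)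
      = fun _ : ℕ => 3 * q / (2 + q) := by
    funext l
    show T ((4/3 : ℝ) * 2 ^ l * (3/2)) / T ((4/3 : ℝ) * 2 ^ l) = 3 * q / (2 + q)
    have e1 : (4/3 : ℝ) * 2 ^ l * (3/2) = 1 * 2 ^ (l+1) := by rw [pow_succ]; ring
    have e2 : (4/3 : ℝ) * 2 ^ l = (4/3) * 2 ^ l := rfl
    rw [e1, hT (l+1) 1 le_rfl one_lt_two, hT l (4/3) (by norm_num) (by norm_num)]
    have hpos : (0:ℝ) < 2 - q - (1 - q) * (4/3) := by nlinarith
    have hY : q ^ l * (2 - q - (1 - q) * (4/3)) ≠ 0 :=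
      mul_ne_zero (hqne l) (ne_of_gt hpos)
    rw [div_eq_div_iff hY (by positivity : (2 + q : ℝ) ≠ 0)]
    ring
  rw [heq2] at hB
  have hval2 : 3 * q / (2 + q) = (3/2 : ℝ) ^ (-α) := tendsto_nhds_unique tendsto_const_nhds hB
  have hcomb : (1 + q) / 2 = 3 * q / (2 + q) := by rw [hval1, hval2]
  have h2q : (0:ℝ) < 2 + q := by linarith
  rw [div_eq_div_iff (by norm_num : (2:ℝ) ≠ 0) (ne_of_gt h2q)] at hcomb
  nlinarith [mul_pos (by linarith : (0:ℝ) < 1 - q) (by linarith : (0:ℝ) < 2 - q)]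

set_option maxHeartbeats 1000000 in
lemma my_cvar (T : ℝ → ℝ) (q : ℝ) (hq0 : 0 < q) (hq1 : q < 1)
    (hT : ∀ (m : ℕ) (t : ℝ), 1 ≤ t → t < 2 → T (t * 2 ^ m) = q ^ m * (2 - q - (1 - q) * t))
    (hTmono : ∀ x x' : ℝ, x ≤ x' → T x' ≤ T x) :
    ConsistentlyVaryingTail T := by
  have hTpos : ∀ x : ℝ, 1 ≤ x → 0 < T x := by
    intro x hx
    obtain ⟨m, t, ht1, ht2, rfl⟩ := my_decomp x hx
    rw [hT m t ht1 ht2]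
    have h0 : 0 < 2 - q - (1 - q) * t := by nlinarith
    positivity
  set B : ℝ → ℝ := fun y => max (1 + 2*(1-q)*(1-y)/q)
      ((2 - q - 2*(1-q)*y) / (q * (2 - q - (1-q)/y))) with hBdef
  have hlow : ∀ y : ℝ, 0 < y → y ≤ 1 → ∀ x : ℝ, 1 ≤ x → 1 ≤ T (x*y) / T x := by
    intro y hy0 hy1 x hx
    have h1 : x * y ≤ x := by nlinarith
    have h2 := hTmono _ _ h1
    have h3 := hTpos x hx
    rw [le_div_iff₀ h3]
    linarith
  have hup : ∀ y : ℝ, 1/2 < y → y < 1 → ∀ x : ℝ, 2 ≤ x → T (x*y) / T x ≤ B y := by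
    intro y hy2 hy1 x hx
    have hy0 : (0:ℝ) < y := by linarith
    obtain ⟨m, t, ht1, ht2, rfl⟩ := my_decomp x (by linarith)
    have hqm : (0:ℝ) < q ^ m := pow_pos hq0 m
    have hht : 0 < 2 - q - (1 - q) * t := by nlinarith
    have hq2 : q ≤ 2 - q - (1 - q) * t := by nlinarith
    rcases le_or_gt 1 (t * y) with hty | hty
    · have e1 : t * 2 ^ m * y = (t * y) * 2 ^ m := by ring
      rw [e1, hT m (t*y) hty (by nlinarith), hT m t ht1 ht2]
      refine le_trans ?_ (le_max_left _ _)
      rw [mul_div_mul_left _ _ (ne_of_gt hqm)]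
      have hB1 : 1 + 2*(1-q)*(1-y)/q = (q + 2*(1-q)*(1-y))/q := by field_simp
      rw [hB1, div_le_div_iff₀ hht hq0]
      nlinarith [mul_nonneg (mul_nonneg (by linarith : (0:ℝ) ≤ 1-q)
        (by linarith : (0:ℝ) ≤ 1-y)) (by nlinarith : (0:ℝ) ≤ 2*(2 - q - (1-q)*t) - q*t)]
    · have hm : m ≠ 0 := by
        rintro rfl
        norm_num at hx
        nlinarith
      obtain ⟨n, rfl⟩ : ∃ n, m = n + 1 := ⟨m - 1, by omega⟩
      have hqn : (0:ℝ) < q ^ n := pow_pos hq0 n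
      have e1 : t * 2 ^ (n+1) * y = (2*t*y) * 2 ^ n := by rw [pow_succ]; ring
      have h2ty1 : 1 ≤ 2*t*y := by nlinarith
      have h2ty2 : 2*t*y < 2 := by nlinarith
      rw [e1, hT n (2*t*y) h2ty1 h2ty2, hT (n+1) t ht1 ht2]
      refine le_trans ?_ (le_max_right _ _)
      have e2 : q ^ (n+1) * (2 - q - (1-q)*t) = q ^ n * (q * (2 - q - (1-q)*t)) := by
        rw [pow_succ]; ring
      rw [e2, mul_div_mul_left _ _ (ne_of_gt hqn)]
      have hinv2 : (1-q)/y < 2*(1-q) := by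
        rw [div_lt_iff₀ hy0]; nlinarith
      have hty' : t < 1/y := by rw [lt_div_iff₀ hy0]; linarith
      have hposy : 0 < 2 - q - (1-q)/y := by nlinarith
      have htle : (1-q)/y ≥ (1-q)*t := by
        rw [ge_iff_le, le_div_iff₀ hy0]; nlinarith
      apply div_le_div₀
      · nlinarith
      · nlinarith [mul_nonneg (mul_nonneg (by linarith : (0:ℝ) ≤ 1-q) hy0.le)
          (by linarith : (0:ℝ) ≤ t-1)]
      · apply mul_pos hq0; linarith
      · apply mul_le_mul_of_nonneg_left _ hq0.le
        linarith
  have hmem : Set.Ioo (1/2 : ℝ) 1 ∈ nhdsWithin 1 (Set.Iio 1) :=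
    Ioo_mem_nhdsLT_of_mem (by norm_num : (1:ℝ) ∈ Set.Ioc (1/2) 1)
  have hBtend : Tendsto B (nhdsWithin 1 (Set.Iio 1)) (nhds 1) := by
    have h1 : Tendsto (fun y : ℝ => 1 + 2*(1-q)*(1-y)/q) (nhds 1) (nhds 1) := by
      have hc : Continuous fun y : ℝ => 1 + 2*(1-q)*(1-y)/q := by
        apply continuous_const.add
        apply Continuous.div_const
        fun_prop
      have h := hc.tendsto 1
      norm_num at h
      exact h
    have h2 : Tendsto (fun y : ℝ => (2 - q - 2*(1-q)*y) / (q * (2 - q - (1-q)/y)))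
        (nhds 1) (nhds 1) := by
      have hc : ContinuousAt (fun y : ℝ => (2 - q - 2*(1-q)*y) / (q * (2 - q - (1-q)/y))) 1 := by
        apply ContinuousAt.div
        · fun_prop
        · apply ContinuousAt.mul continuousAt_const
          apply ContinuousAt.sub continuousAt_const
          exact ContinuousAt.div continuousAt_const continuousAt_id one_ne_zero
        · show q * (2 - q - (1-q)/1) ≠ 0
          have e : q * (2 - q - (1-q)/1 : ℝ) = q := by rw [div_one]; ring
          rw [e]; exact ne_of_gt hq0
      have h := hc.tendsto
      have hval : (2 - q - 2*(1-q)*1) / (q * (2 - q - (1-q)/1)) = 1 := by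
        have e : (2 - q - 2*(1-q)*1 : ℝ) = q := by ring
        have e2 : (2 - q - (1-q)/1 : ℝ) = 1 := by ring
        rw [e, e2, mul_one, div_self (ne_of_gt hq0)]
      rw [hval] at h
      exact h
    have hmax := Filter.Tendsto.max
      (h1.mono_left (nhdsWithin_le_nhds (s := Set.Iio 1)))
      (h2.mono_left (nhdsWithin_le_nhds (s := Set.Iio 1)))
    rw [max_self] at hmax
    exact hmax
  unfold ConsistentlyVaryingTail
  apply tendsto_of_tendsto_of_tendsto_of_le_of_le' tendsto_const_nhds hBtend
  · filter_upwards [hmem] with y hy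
    have hev_up : ∀ᶠ x in atTop, T (x*y)/T x ≤ B y :=
      eventually_atTop.mpr ⟨2, fun x hx => hup y hy.1 hy.2 x hx⟩
    have hev_low : ∀ᶠ x in atTop, 1 ≤ T (x*y)/T x :=
      eventually_atTop.mpr ⟨1, fun x hx => hlow y (by linarith [hy.1]) hy.2.le x hx⟩
    exact le_limsup_of_frequently_le hev_low.frequently
      (isBoundedUnder_of_eventually_le hev_up)
  · filter_upwards [hmem] with y hy
    have hev_up : ∀ᶠ x in atTop, T (x*y)/T x ≤ B y :=
      eventually_atTop.mpr ⟨2, fun x hx => hup y hy.1 hy.2 x hx⟩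
    have hev_low : ∀ᶠ x in atTop, 1 ≤ T (x*y)/T x :=
      eventually_atTop.mpr ⟨1, fun x hx => hlow y (by linarith [hy.1]) hy.2.le x hx⟩
    exact limsup_le_of_le (Filter.IsCoboundedUnder.of_frequently_ge hev_low.frequently) hev_up

set_option maxHeartbeats 2000000 in
/-- For `ξ = (1+U)·2^G` with `U` uniform on `[0,1]` and `G` geometric with parameter
`q ∈ (0,1)`, independent, the distribution function of `ξ` has a consistently varying
tail but not a regularly varying tail. -/
theorem cvar_not_rvar_example
    {Ω : Type*} [MeasurableSpace Ω] (μ : Measure Ω) [IsProbabilityMeasure μ]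
    (U : Ω → ℝ) (G : Ω → ℕ) (hU : Measurable U) (hG : Measurable G)
    (hUG : IndepFun U G μ)
    (hUlaw : Measure.map U μ = MeasureTheory.volume.restrict (Set.Icc (0 : ℝ) 1))
    (q : ℝ) (hq : q ∈ Set.Ioo (0 : ℝ) 1)
    (hGlaw : ∀ l : ℕ, μ {ω | G ω = l} = ENNReal.ofReal ((1 - q) * q ^ l)) :
    ConsistentlyVaryingTail
        (fun x => (μ {ω | (1 + U ω) * 2 ^ (G ω) > x}).toReal) ∧
      ¬ ∃ α : ℝ, 0 ≤ α ∧ ∀ y : ℝ, 0 < y →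
        Tendsto (fun x : ℝ =>
            (μ {ω | (1 + U ω) * 2 ^ (G ω) > x * y}).toReal /
              (μ {ω | (1 + U ω) * 2 ^ (G ω) > x}).toReal)
          atTop (nhds (y ^ (-α))) := by
  obtain ⟨hq0, hq1⟩ := hq
  have hT : ∀ (m : ℕ) (t : ℝ), 1 ≤ t → t < 2 →
      (fun x : ℝ => (μ {ω | (1 + U ω) * 2 ^ (G ω) > x}).toReal) (t * 2 ^ m)
        = q ^ m * (2 - q - (1 - q) * t) := by
    intro m t ht1 ht2
    have h0 : 0 < 2 - q - (1 - q) * t := by nlinarith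
    simp only
    rw [my_tail_formula μ U G hU hG hUG hUlaw q ⟨hq0, hq1⟩ hGlaw m t ht1 ht2,
      ENNReal.toReal_ofReal (mul_nonneg (pow_nonneg hq0.le m) h0.le)]
  have hTmono : ∀ x x' : ℝ, x ≤ x' →
      (fun x : ℝ => (μ {ω | (1 + U ω) * 2 ^ (G ω) > x}).toReal) x'
        ≤ (fun x : ℝ => (μ {ω | (1 + U ω) * 2 ^ (G ω) > x}).toReal) x := by
    intro x x' hxx'
    exact ENNReal.toReal_mono (measure_ne_top μ _)
      (measure_mono fun ω h => lt_of_le_of_lt hxx' h)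
  refine ⟨my_cvar _ q hq0 hq1 hT hTmono, ?_⟩
  exact my_notreg (fun x : ℝ => (μ {ω | (1 + U ω) * 2 ^ (G ω) > x}).toReal) q hq0 hq1 hT
end
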